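/- arXiv:1604.04141 — 5 statements merged into one kernel-verified Lean document; each statement's English description precedes it below -/
import Mathlib

section
/- Let A and B be n×n complex positive semidefinite matrices. Then det(A² + |AB|²) ≥ det(A² + A²B²), i.e., det(A² + BA²B) ≥ det(A² + A²B²). -/
open scoped ComplexOrder Matrix Classical

/-- The positive semidefinite square root of a positive semidefinite matrix
(junk value `0` if the matrix is not positive semidefinite). -/
noncomputable def sqrtm {n : ℕ} (A : Matrix (Fin n) (Fin n) ℂ) : Matrix (Fin n) (Fin n) ℂ :=
  if h : A.PosSemidef then
    (h.1.eigenvectorUnitary : Matrix (Fin n) (Fin n) ℂ) *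
      Matrix.diagonal ((↑) ∘ Real.sqrt ∘ h.1.eigenvalues) *
      (star h.1.eigenvectorUnitary : Matrix (Fin n) (Fin n) ℂ) else 0

/-- The absolute value `|X| = (Xᴴ X)^{1/2}` of a matrix. -/
noncomputable def absm {n : ℕ} (X : Matrix (Fin n) (Fin n) ℂ) : Matrix (Fin n) (Fin n) ℂ :=
  sqrtm (Xᴴ * X)

open Matrix

variable {n : ℕ}

lemma sqrtm_spec {M : Matrix (Fin n) (Fin n) ℂ} (hM : M.PosSemidef) :
    (sqrtm M).PosSemidef ∧ sqrtm M * sqrtm M = M := by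
  rw [sqrtm, dif_pos hM]
  set U : Matrix (Fin n) (Fin n) ℂ := (hM.1.eigenvectorUnitary : Matrix (Fin n) (Fin n) ℂ) with hUdef
  set D : Matrix (Fin n) (Fin n) ℂ := Matrix.diagonal ((↑) ∘ Real.sqrt ∘ hM.1.eigenvalues) with hD
  have hU : (star hM.1.eigenvectorUnitary : Matrix (Fin n) (Fin n) ℂ) * U = 1 :=
    Unitary.coe_star_mul_self _
  constructor
  · have hDps : D.PosSemidef := Matrix.posSemidef_diagonal_iff.mpr fun i =>
      Complex.zero_le_real.mpr (Real.sqrt_nonneg _)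
    have := hDps.mul_mul_conjTranspose_same U
    rwa [← Matrix.star_eq_conjTranspose, hUdef, ← Unitary.coe_star] at this
  · have hDD : D * D = Matrix.diagonal (RCLike.ofReal ∘ hM.1.eigenvalues) := by
      rw [hD, Matrix.diagonal_mul_diagonal]
      congr 1; funext i
      simp only [Function.comp_apply]
      rw [← Complex.ofReal_mul, Real.mul_self_sqrt (hM.eigenvalues_nonneg i)]; rfl
    calc _ = U * (D * ((star hM.1.eigenvectorUnitary : Matrix (Fin n) (Fin n) ℂ) * U) * D) *
          (star hM.1.eigenvectorUnitary : Matrix (Fin n) (Fin n) ℂ) := by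
          simp only [Matrix.mul_assoc]; rfl
      _ = M := by
          rw [hU, Matrix.mul_one, hDD]
          conv_rhs => rw [hM.1.spectral_theorem, Unitary.conjStarAlgAut_apply]


lemma aux_posDef_of_det_ne_zero {M : Matrix (Fin n) (Fin n) ℂ} (hM : M.PosSemidef)
    (hd : M.det ≠ 0) : M.PosDef := by
  exact hM.posDef_iff_det_ne_zero.mpr hd

lemma aux_det_nonneg {M : Matrix (Fin n) (Fin n) ℂ} (hM : M.PosSemidef) : 0 ≤ M.det := by
  rw [hM.1.det_eq_prod_eigenvalues]
  refine Finset.prod_nonneg fun i _ => ?_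
  exact Complex.zero_le_real.mpr (hM.eigenvalues_nonneg i)

lemma aux_det_one_add {Z : Matrix (Fin n) (Fin n) ℂ} (hZ : Z.IsHermitian) :
    det (1 + Z) = ∏ i, (1 + (hZ.eigenvalues i : ℂ)) := by
  have hU := (Matrix.mem_unitaryGroup_iff).mp (hZ.eigenvectorUnitary).2
  have h1 : (1 : Matrix (Fin n) (Fin n) ℂ) + Z
      = (hZ.eigenvectorUnitary : Matrix (Fin n) (Fin n) ℂ) *
        (1 + diagonal (RCLike.ofReal ∘ hZ.eigenvalues)) *
        (star (hZ.eigenvectorUnitary : Matrix (Fin n) (Fin n) ℂ)) := by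
    rw [Matrix.mul_add, Matrix.add_mul, Matrix.mul_one, hU]
    conv_lhs => rw [hZ.spectral_theorem]
    rw [Unitary.conjStarAlgAut_apply]
  have h2 : (1 : Matrix (Fin n) (Fin n) ℂ) + diagonal (RCLike.ofReal ∘ hZ.eigenvalues)
      = diagonal (fun i => 1 + (hZ.eigenvalues i : ℂ)) := by
    rw [← Matrix.diagonal_one, Matrix.diagonal_add]
    rfl
  have h3 : det ((hZ.eigenvectorUnitary : Matrix (Fin n) (Fin n) ℂ)) *
      det (star (hZ.eigenvectorUnitary : Matrix (Fin n) (Fin n) ℂ)) = 1 := by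
    rw [← det_mul, (Matrix.mem_unitaryGroup_iff).mp (hZ.eigenvectorUnitary).2, det_one]
  rw [h1, det_mul, det_mul, h2, det_diagonal]
  rw [mul_right_comm, h3, one_mul]

lemma aux_prod_ge {μ : Fin n → ℝ} (h0 : ∀ i, 0 ≤ μ i) (h1 : ∏ i, μ i = 1) :
    (2:ℝ)^n ≤ ∏ i, (1 + μ i) := by
  have key : ∀ i, 2 * Real.sqrt (μ i) ≤ 1 + μ i := fun i => by
    nlinarith [Real.sq_sqrt (h0 i), Real.sqrt_nonneg (μ i), sq_nonneg (Real.sqrt (μ i) - 1)]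
  have hs : ∏ i, Real.sqrt (μ i) = 1 := by
    have hsq : (∏ i, Real.sqrt (μ i))^2 = 1 := by
      rw [← Finset.prod_pow]
      calc ∏ i, Real.sqrt (μ i) ^ 2 = ∏ i, μ i :=
        Finset.prod_congr rfl fun i _ => Real.sq_sqrt (h0 i)
      _ = 1 := h1
    have hnn : 0 ≤ ∏ i, Real.sqrt (μ i) :=
      Finset.prod_nonneg fun i _ => Real.sqrt_nonneg _
    nlinarith [hsq, hnn]
  calc (2:ℝ)^n = ∏ _i : Fin n, (2:ℝ) := by simp
  _ = (∏ _i : Fin n, (2:ℝ)) * ∏ i, Real.sqrt (μ i) := by rw [hs, mul_one]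
  _ = ∏ i : Fin n, (2 * Real.sqrt (μ i)) := by rw [← Finset.prod_mul_distrib]
  _ ≤ ∏ i, (1 + μ i) := Finset.prod_le_prod (fun i _ => by positivity) (fun i _ => key i)

lemma aux_minkowski {X Y : Matrix (Fin n) (Fin n) ℂ} (hX : X.PosDef) (hY : Y.PosSemidef)
    (hdet : Y.det = X.det) : (2:ℂ)^n * X.det ≤ (X + Y).det := by
  set R := sqrtm X with hRdef
  have hRps : R.PosSemidef := (sqrtm_spec hX.posSemidef).1
  have hRR : R * R = X := (sqrtm_spec hX.posSemidef).2
  have hdX : X.det ≠ 0 := hX.det_pos.ne'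
  have hRR2 : R.det * R.det = X.det := by rw [← det_mul, hRR]
  have hdR : R.det ≠ 0 := fun h => hdX (by rw [← hRR2, h, zero_mul])
  have hu : IsUnit R.det := isUnit_iff_ne_zero.mpr hdR
  have hRinvH : R⁻¹ᴴ = R⁻¹ := by rw [Matrix.conjTranspose_nonsing_inv, hRps.1]
  set Z := R⁻¹ * Y * R⁻¹ with hZdef
  have hZps : Z.PosSemidef := by
    have := hY.conjTranspose_mul_mul_same R⁻¹
    rwa [hRinvH] at this
  have hdZ : Z.det = 1 := by
    rw [hZdef, det_mul, det_mul, Matrix.det_nonsing_inv, Ring.inverse_eq_inv', hdet, ← hRR2]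
    field_simp
  have hXY : X + Y = R * (1 + Z) * R := by
    rw [Matrix.mul_add, Matrix.add_mul, Matrix.mul_one, hRR, hZdef]
    congr 1
    refine (?_ : _ = Y).symm
    calc R * (R⁻¹ * Y * R⁻¹) * R = (R * R⁻¹) * Y * (R⁻¹ * R) := by
          simp only [Matrix.mul_assoc]
    _ = Y := by rw [Matrix.mul_nonsing_inv _ hu, Matrix.nonsing_inv_mul _ hu,
          Matrix.one_mul, Matrix.mul_one]
  have hμ0 : ∀ i, 0 ≤ hZps.1.eigenvalues i := hZps.eigenvalues_nonneg
  have hμ1 : ∏ i, hZps.1.eigenvalues i = 1 := by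
    have := hZps.1.det_eq_prod_eigenvalues
    rw [hdZ] at this
    have h' : ((∏ i, hZps.1.eigenvalues i : ℝ) : ℂ) = ((1:ℝ):ℂ) := by push_cast; exact this.symm
    exact_mod_cast h'
  have h2n : ((2:ℂ))^n ≤ det (1 + Z) := by
    rw [aux_det_one_add hZps.1]
    have : (((2:ℝ)^n : ℝ) : ℂ) ≤ ((∏ i, (1 + hZps.1.eigenvalues i) : ℝ) : ℂ) := by
      rw [Complex.real_le_real]
      exact aux_prod_ge hμ0 hμ1
    push_cast at this
    exact this
  calc (2:ℂ)^n * X.det ≤ det (1 + Z) * X.det := by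
        refine mul_le_mul_of_nonneg_right h2n (aux_det_nonneg hX.posSemidef)
  _ = (X + Y).det := by
        rw [hXY, det_mul, det_mul]
        linear_combination (-(det (1 + Z))) * hRR2

theorem det_sq_add_sq_mul_sq_le' {n : ℕ} (A B : Matrix (Fin n) (Fin n) ℂ)
    (hA : A.PosSemidef) (hB : B.PosSemidef) :
    (A ^ 2 + A ^ 2 * B ^ 2).det ≤ (A ^ 2 + (B * A ^ 2 * B)).det := by
  set T := A ^ 2 with hTdef
  have hTps : T.PosSemidef := hA.pow 2
  have hBTB : (B * T * B).PosSemidef := by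
    have := hTps.conjTranspose_mul_mul_same B
    rwa [hB.1] at this
  have hsum : (T + B * T * B).PosSemidef := hTps.add hBTB
  have hIB2 : ((1 : Matrix (Fin n) (Fin n) ℂ) + B ^ 2).PosDef :=
    Matrix.PosDef.one.add_posSemidef (hB.pow 2)
  have hLHS : (T + T * B ^ 2).det = T.det * ((1 : Matrix (Fin n) (Fin n) ℂ) + B ^ 2).det := by
    rw [show T + T * B ^ 2 = T * (1 + B ^ 2) by rw [Matrix.mul_add, Matrix.mul_one], det_mul]
  by_cases hdT : T.det = 0
  · rw [hLHS, hdT, zero_mul]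
    exact aux_det_nonneg hsum
  · have hTpd : T.PosDef := aux_posDef_of_det_ne_zero hTps hdT
    set C : Matrix (Fin n) (Fin n) ℂ := 1 + Complex.I • B with hCdef
    have hCH : Cᴴ = 1 - Complex.I • B := by
      rw [hCdef, conjTranspose_add, conjTranspose_one, conjTranspose_smul, hB.1,
        Complex.star_def, Complex.conj_I, neg_smul, sub_eq_add_neg]
    set X := Cᴴ * T * C with hXdef
    set Y := C * T * Cᴴ with hYdef
    have hXps : X.PosSemidef := hTps.conjTranspose_mul_mul_same C
    have hYps : Y.PosSemidef := hTps.mul_mul_conjTranspose_same C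
    have hCHC : Cᴴ * C = 1 + B ^ 2 := by
      rw [hCH, hCdef]
      simp only [Matrix.mul_add, Matrix.add_mul, Matrix.sub_mul, Matrix.mul_sub,
        Matrix.smul_mul, Matrix.mul_smul, Matrix.one_mul, Matrix.mul_one, smul_smul,
        Complex.I_mul_I, neg_smul, one_smul, pow_two]
      match_scalars <;> simp [Complex.I_sq] <;> ring
    have hCCH : C * Cᴴ = 1 + B ^ 2 := by
      rw [hCH, hCdef]
      simp only [Matrix.mul_add, Matrix.add_mul, Matrix.sub_mul, Matrix.mul_sub,
        Matrix.smul_mul, Matrix.mul_smul, Matrix.one_mul, Matrix.mul_one, smul_smul,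
        Complex.I_mul_I, neg_smul, one_smul, pow_two]
      match_scalars <;> simp [Complex.I_sq] <;> ring
    have hdX : X.det = T.det * ((1 : Matrix (Fin n) (Fin n) ℂ) + B ^ 2).det := by
      have e1 : X.det = Cᴴ.det * T.det * C.det := by rw [hXdef, det_mul, det_mul]
      have e2 : Cᴴ.det * C.det = ((1 : Matrix (Fin n) (Fin n) ℂ) + B ^ 2).det := by
        rw [← det_mul, hCHC]
      rw [e1]; linear_combination T.det * e2
    have hdY : Y.det = T.det * ((1 : Matrix (Fin n) (Fin n) ℂ) + B ^ 2).det := by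
      have e1 : Y.det = C.det * T.det * Cᴴ.det := by rw [hYdef, det_mul, det_mul]
      have e2 : C.det * Cᴴ.det = ((1 : Matrix (Fin n) (Fin n) ℂ) + B ^ 2).det := by
        rw [← det_mul, hCCH]
      rw [e1]; linear_combination T.det * e2
    have hXpd : X.PosDef := aux_posDef_of_det_ne_zero hXps
      (by rw [hdX]; exact mul_ne_zero hdT hIB2.det_pos.ne')
    have hkey : (2:ℂ)^n * X.det ≤ (X + Y).det :=
      aux_minkowski hXpd hYps (by rw [hdX, hdY])
    have hsum2 : T + B * T * B = (2⁻¹ : ℂ) • (X + Y) := by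
      rw [hXdef, hYdef, hCH, hCdef]
      simp only [Matrix.add_mul, Matrix.mul_add, Matrix.sub_mul, Matrix.mul_sub,
        Matrix.smul_mul, Matrix.mul_smul, Matrix.one_mul, Matrix.mul_one, smul_smul,
        Complex.I_mul_I, neg_smul, one_smul, smul_add, smul_sub, neg_neg]
      match_scalars <;> simp [Complex.I_sq] <;> ring
    have hpos : (0:ℂ) ≤ (2⁻¹:ℂ)^n := by
      refine pow_nonneg ?_ n
      rw [show ((2:ℂ))⁻¹ = ((2⁻¹:ℝ):ℂ) by norm_num]
      exact Complex.zero_le_real.mpr (by norm_num)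
    have hRHS : (T + B * T * B).det = (2⁻¹:ℂ)^n * (X + Y).det := by
      rw [hsum2, Matrix.det_smul, Fintype.card_fin]
    rw [hLHS, ← hdX, hRHS]
    calc X.det = (2⁻¹:ℂ)^n * ((2:ℂ)^n * X.det) := by
          rw [← mul_assoc, ← mul_pow]; norm_num
    _ ≤ (2⁻¹:ℂ)^n * (X + Y).det := mul_le_mul_of_nonneg_left hkey hpos

/-- For positive semidefinite `A, B`, `det(A² + |AB|²) ≥ det(A² + A²B²)`,
where `|AB|² = B A² B`. -/
theorem det_sq_add_sq_mul_sq_le {n : ℕ} (A B : Matrix (Fin n) (Fin n) ℂ)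
    (hA : A.PosSemidef) (hB : B.PosSemidef) :
    (A ^ 2 + A ^ 2 * B ^ 2).det ≤ (A ^ 2 + (absm (A * B)) ^ 2).det := by
  have h1 : (A * B)ᴴ * (A * B) = B * A ^ 2 * B := by
    rw [conjTranspose_mul, hA.1, hB.1, pow_two]
    noncomm_ring
  have hps : ((A * B)ᴴ * (A * B)).PosSemidef := posSemidef_conjTranspose_mul_self _
  have habs : (absm (A * B)) ^ 2 = B * A ^ 2 * B := by
    rw [absm, pow_two, (sqrtm_spec hps).2, h1]
  rw [habs]
  exact det_sq_add_sq_mul_sq_le' A B hA hB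
end

section
/- Let X and Y be n×n complex matrices whose eigenvalues are all real and nonnegative. If the eigenvalue vector of X (sorted in descending order) weakly log-majorizes the eigenvalue vector of Y, then det(I + X) ≥ det(I + Y). -/
open scoped ComplexOrder Matrix

/-- Pointwise convexity inequality: `log(1+v) - log(1+u) ≤ (v/(1+v)) (log v - log u)`. -/
lemma log_one_add_ineq (u v : ℝ) (hu : 0 < u) (hv : 0 < v) :
    Real.log (1 + v) - Real.log (1 + u) ≤ v / (1 + v) * (Real.log v - Real.log u) := by
  set f : ℝ → ℝ := fun t => Real.log (1 + t) - v / (1 + v) * Real.log t with hf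
  have hderiv : ∀ t : ℝ, 0 < t →
      HasDerivAt f ((t - v) / (t * (1 + t) * (1 + v))) t := by
    intro t ht
    have h1 : HasDerivAt (fun t : ℝ => Real.log (1 + t)) (1 / (1 + t)) t := by
      have := ((hasDerivAt_id t).const_add 1).log (x := t) (by simp only [id_eq]; linarith)
      simpa using this
    have h2 : HasDerivAt (fun t : ℝ => v / (1 + v) * Real.log t)
        (v / (1 + v) * t⁻¹) t := (Real.hasDerivAt_log (ne_of_gt ht)).const_mul _
    have := h1.sub h2
    refine (show HasDerivAt f _ t from this).congr_deriv ?_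
    have ht1 : (1 + t) ≠ 0 := by linarith
    have hv1 : (1 + v) ≠ 0 := by linarith
    field_simp
    ring
  have hcont : ∀ s : Set ℝ, s ⊆ Set.Ioi 0 → ContinuousOn f s := by
    intro s hs
    exact fun t hts => ((hderiv t (hs hts)).continuousAt).continuousWithinAt
  rcases lt_trichotomy u v with h | h | h
  · have : StrictAntiOn f (Set.Icc u v) := by
      apply strictAntiOn_of_deriv_neg (convex_Icc u v)
      · exact hcont _ (fun t ht => lt_of_lt_of_le hu ht.1)
      · intro t ht
        rw [interior_Icc] at ht
        have ht0 : 0 < t := hu.trans ht.1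
        rw [(hderiv t ht0).deriv]
        apply div_neg_of_neg_of_pos
        · linarith [ht.2]
        · positivity
    have := this (Set.left_mem_Icc.2 h.le) (Set.right_mem_Icc.2 h.le) h
    simp only [hf] at this
    linarith
  · subst h; simp
  · have : StrictMonoOn f (Set.Icc v u) := by
      apply strictMonoOn_of_deriv_pos (convex_Icc v u)
      · exact hcont _ (fun t ht => lt_of_lt_of_le hv ht.1)
      · intro t ht
        rw [interior_Icc] at ht
        have ht0 : 0 < t := hv.trans ht.1
        rw [(hderiv t ht0).deriv]
        apply div_pos
        · linarith [ht.1]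
        · positivity
    have := this (Set.left_mem_Icc.2 h.le) (Set.right_mem_Icc.2 h.le) h
    simp only [hf] at this
    linarith

/-- Abel summation: antitone nonnegative weights against a sequence with nonpositive
partial sums give a nonpositive weighted sum (strengthened form for induction). -/
lemma abel_aux (c u : ℕ → ℝ) (hc : ∀ i, c (i + 1) ≤ c i) :
    ∀ n : ℕ, (∀ k ≤ n, ∑ i ∈ Finset.range k, u i ≤ 0) →
      ∑ i ∈ Finset.range n, c i * u i ≤ c n * ∑ i ∈ Finset.range n, u i := by
  intro n
  induction n with
  | zero => simp
  | succ n ih =>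
    intro hS
    have h1 := ih (fun k hk => hS k (hk.trans (Nat.le_succ n)))
    have hSn1 := hS (n + 1) le_rfl
    rw [Finset.sum_range_succ] at hSn1 ⊢
    rw [Finset.sum_range_succ (f := u)]
    nlinarith [hc n, mul_nonneg (sub_nonneg.2 (hc n)) (neg_nonneg.2 hSn1)]

lemma abel_nonpos (c u : ℕ → ℝ) (hc : ∀ i, c (i + 1) ≤ c i) (hc0 : ∀ i, 0 ≤ c i)
    (n : ℕ) (hS : ∀ k ≤ n, ∑ i ∈ Finset.range k, u i ≤ 0) :
    ∑ i ∈ Finset.range n, c i * u i ≤ 0 := by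
  have := abel_aux c u hc n hS
  have h2 := mul_nonpos_of_nonneg_of_nonpos (hc0 n) (hS n le_rfl)
  linarith

/-- Positive case of the product inequality (Tomić-style argument via logarithms). -/
lemma prod_one_add_le_pos (n : ℕ) (x y : ℕ → ℝ) (hy : Antitone y) (hy0 : ∀ i, 0 ≤ y i)
    (hxp : ∀ i < n, 0 < x i) (hyp : ∀ i < n, 0 < y i)
    (hmaj : ∀ k ≤ n, ∏ i ∈ Finset.range k, y i ≤ ∏ i ∈ Finset.range k, x i) :
    ∏ i ∈ Finset.range n, (1 + y i) ≤ ∏ i ∈ Finset.range n, (1 + x i) := by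
  have h1y : ∀ i < n, (0:ℝ) < 1 + y i := fun i hi => by linarith [hyp i hi]
  have h1x : ∀ i < n, (0:ℝ) < 1 + x i := fun i hi => by linarith [hxp i hi]
  set c : ℕ → ℝ := fun i => y i / (1 + y i) with hcdef
  set u : ℕ → ℝ := fun i => Real.log (y i) - Real.log (x i) with hudef
  have hc : ∀ i, c (i + 1) ≤ c i := by
    intro i
    have h1 : (0:ℝ) < 1 + y (i+1) := by linarith [hy0 (i+1)]
    have h2 : (0:ℝ) < 1 + y i := by linarith [hy0 i]
    have h3 : y (i+1) ≤ y i := hy (Nat.le_succ i)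
    rw [hcdef, div_le_div_iff₀ h1 h2]
    nlinarith
  have hc0 : ∀ i, 0 ≤ c i := by
    intro i
    have h2 : (0:ℝ) < 1 + y i := by linarith [hy0 i]
    exact div_nonneg (hy0 i) h2.le
  have hS : ∀ k ≤ n, ∑ i ∈ Finset.range k, u i ≤ 0 := by
    intro k hk
    have hyk : ∀ i ∈ Finset.range k, y i ≠ 0 :=
      fun i hi => ne_of_gt (hyp i ((Finset.mem_range.1 hi).trans_le hk))
    have hxk : ∀ i ∈ Finset.range k, x i ≠ 0 :=
      fun i hi => ne_of_gt (hxp i ((Finset.mem_range.1 hi).trans_le hk))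
    have : ∑ i ∈ Finset.range k, u i
        = Real.log (∏ i ∈ Finset.range k, y i) - Real.log (∏ i ∈ Finset.range k, x i) := by
      rw [Real.log_prod hyk, Real.log_prod hxk, Finset.sum_sub_distrib]
    rw [this, sub_nonpos]
    apply Real.log_le_log
    · exact Finset.prod_pos (fun i hi => hyp i ((Finset.mem_range.1 hi).trans_le hk))
    · exact hmaj k hk
  have habel : ∑ i ∈ Finset.range n, c i * u i ≤ 0 := abel_nonpos c u hc hc0 n hS
  have hpt : ∀ i ∈ Finset.range n,
      Real.log (1 + y i) - Real.log (1 + x i) ≤ c i * u i := by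
    intro i hi
    have hi' := Finset.mem_range.1 hi
    exact log_one_add_ineq (x i) (y i) (hxp i hi') (hyp i hi')
  have hlog : ∑ i ∈ Finset.range n, Real.log (1 + y i)
      ≤ ∑ i ∈ Finset.range n, Real.log (1 + x i) := by
    have := Finset.sum_le_sum hpt
    rw [Finset.sum_sub_distrib] at this
    linarith
  calc ∏ i ∈ Finset.range n, (1 + y i)
      = Real.exp (∑ i ∈ Finset.range n, Real.log (1 + y i)) := by
        rw [Real.exp_sum]
        exact (Finset.prod_congr rfl fun i hi =>
          (Real.exp_log (h1y i (Finset.mem_range.1 hi))).symm)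
    _ ≤ Real.exp (∑ i ∈ Finset.range n, Real.log (1 + x i)) := Real.exp_le_exp.2 hlog
    _ = ∏ i ∈ Finset.range n, (1 + x i) := by
        rw [Real.exp_sum]
        exact Finset.prod_congr rfl fun i hi => Real.exp_log (h1x i (Finset.mem_range.1 hi))

/-- The product inequality from weak log-majorization, for `ℕ`-indexed sequences. -/
lemma prod_one_add_le (n : ℕ) (x y : ℕ → ℝ) (hy : Antitone y) (hy0 : ∀ i, 0 ≤ y i)
    (hx0 : ∀ i, 0 ≤ x i)
    (hmaj : ∀ k ≤ n, ∏ i ∈ Finset.range k, y i ≤ ∏ i ∈ Finset.range k, x i) :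
    ∏ i ∈ Finset.range n, (1 + y i) ≤ ∏ i ∈ Finset.range n, (1 + x i) := by
  induction n with
  | zero => simp
  | succ n ih =>
    by_cases hyn : y n = 0
    · rw [Finset.prod_range_succ, Finset.prod_range_succ, hyn]
      have h1 := ih (fun k hk => hmaj k (hk.trans (Nat.le_succ n)))
      have h2 : (0:ℝ) ≤ ∏ i ∈ Finset.range n, (1 + x i) :=
        Finset.prod_nonneg fun i _ => by linarith [hx0 i]
      have h3 : (1:ℝ) ≤ 1 + x n := by linarith [hx0 n]
      nlinarith
    · have hynpos : 0 < y n := lt_of_le_of_ne (hy0 n) (Ne.symm hyn)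
      have hyp : ∀ i < n + 1, 0 < y i :=
        fun i hi => lt_of_lt_of_le hynpos (hy (Nat.lt_succ_iff.mp hi))
      have hxp : ∀ i < n + 1, 0 < x i := by
        intro i hi
        rcases (hx0 i).lt_or_eq with h | h
        · exact h
        · exfalso
          have hz : ∏ j ∈ Finset.range (n+1), x j = 0 :=
            Finset.prod_eq_zero (Finset.mem_range.2 hi) h.symm
          have hp : 0 < ∏ j ∈ Finset.range (n+1), y j :=
            Finset.prod_pos fun j hj => hyp j (Finset.mem_range.1 hj)
          have := hmaj (n+1) le_rfl
          rw [hz] at this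
          linarith
      exact prod_one_add_le_pos (n+1) x y hy hy0 hxp hyp hmaj

open scoped ComplexOrder Matrix

/-- If the charpoly of `M` splits over real scalars `x`, then `det (1 + M) = ∏ (1 + x i)`. -/
lemma det_one_add_of_charpoly {n : ℕ} (M : Matrix (Fin n) (Fin n) ℂ) (x : Fin n → ℝ)
    (hM : M.charpoly = ∏ i, (Polynomial.X - Polynomial.C (x i : ℂ))) :
    (1 + M).det = ((∏ i, (1 + x i) : ℝ) : ℂ) := by
  have h1 : Polynomial.eval (-1 : ℂ) M.charpoly = (-(1 + M)).det := by
    rw [Matrix.charpoly, eval_det, Matrix.matPolyEquiv_charmatrix]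
    congr 1
    rw [Polynomial.eval_sub, Polynomial.eval_X, Polynomial.eval_C]
    have hs : (Matrix.scalar (Fin n)) (-1 : ℂ) = -(1 : Matrix (Fin n) (Fin n) ℂ) := by
      simp [map_neg]
    rw [hs]
    abel
  have h2 : Polynomial.eval (-1 : ℂ) M.charpoly
      = (-1 : ℂ) ^ n * ∏ i, (1 + (x i : ℂ)) := by
    rw [hM, Polynomial.eval_prod]
    have : ∀ i : Fin n, Polynomial.eval (-1 : ℂ) (Polynomial.X - Polynomial.C (x i : ℂ))
        = (-1) * (1 + (x i : ℂ)) := by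
      intro i
      rw [Polynomial.eval_sub, Polynomial.eval_X, Polynomial.eval_C]
      ring
    rw [Finset.prod_congr rfl (fun i _ => this i), Finset.prod_mul_distrib,
      Finset.prod_const, Finset.card_univ, Fintype.card_fin]
  have h3 : (-(1 + M)).det = (-1 : ℂ) ^ n * (1 + M).det := by
    rw [Matrix.det_neg, Fintype.card_fin]
  have h4 : (-1 : ℂ) ^ n * (1 + M).det = (-1 : ℂ) ^ n * ∏ i, (1 + (x i : ℂ)) := by
    rw [← h3, ← h1, h2]
  have h5 := mul_left_cancel₀ (pow_ne_zero n (neg_ne_zero.2 one_ne_zero)) h4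
  rw [h5]
  push_cast
  rfl

/-- If the eigenvalues of `X` and `Y` are all real and nonnegative (witnessed by
factorizations of the characteristic polynomials over descending real vectors `x`, `y`)
and `x` weakly log-majorizes `y`, then `det(I + X) ≥ det(I + Y)`. -/
theorem det_one_add_le_of_wlogmajorize {n : ℕ} (X Y : Matrix (Fin n) (Fin n) ℂ)
    (x y : Fin n → ℝ) (hx : Antitone x) (hy : Antitone y)
    (hx0 : ∀ i, 0 ≤ x i) (hy0 : ∀ i, 0 ≤ y i)
    (hX : X.charpoly = ∏ i, (Polynomial.X - Polynomial.C (x i : ℂ)))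
    (hY : Y.charpoly = ∏ i, (Polynomial.X - Polynomial.C (y i : ℂ)))
    (hmaj : ∀ k : Fin n, ∏ i ∈ Finset.Iic k, y i ≤ ∏ i ∈ Finset.Iic k, x i) :
    (1 + Y).det ≤ (1 + X).det := by
  rw [det_one_add_of_charpoly X x hX, det_one_add_of_charpoly Y y hY]
  rw [Complex.real_le_real]
  -- reduce to ℕ-indexed sequences
  set X' : ℕ → ℝ := fun j => if h : j < n then x ⟨j, h⟩ else 0 with hX'
  set Y' : ℕ → ℝ := fun j => if h : j < n then y ⟨j, h⟩ else 0 with hY'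
  have hY'anti : Antitone Y' := by
    intro i j hij
    by_cases h2 : j < n
    · have h1 : i < n := lt_of_le_of_lt hij h2
      simp only [hY', dif_pos h1, dif_pos h2]
      exact hy (Fin.mk_le_mk.2 hij)
    · simp only [hY', dif_neg h2]
      split_ifs with h1
      · exact hy0 _
      · exact le_refl _
  have hY'0 : ∀ i, 0 ≤ Y' i := fun i => by
    by_cases h : i < n <;> simp [hY', h, hy0]
  have hX'0 : ∀ i, 0 ≤ X' i := fun i => by
    by_cases h : i < n <;> simp [hX', h, hx0]
  have hrange : ∀ (m : ℕ) (hm : m < n),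
      Finset.range (m + 1) = Finset.map Fin.valEmbedding (Finset.Iic (⟨m, hm⟩ : Fin n)) := by
    intro m hm
    ext j
    simp only [Finset.mem_range, Finset.mem_map, Finset.mem_Iic, Fin.valEmbedding_apply]
    constructor
    · intro hj
      exact ⟨⟨j, by omega⟩, Fin.mk_le_mk.2 (by omega), rfl⟩
    · rintro ⟨i, hi, rfl⟩
      have := Fin.mk_le_mk.1 (show i ≤ ⟨m, hm⟩ from hi)
      omega
  have hbridge : ∀ (m : ℕ) (hm : m < n) (z : Fin n → ℝ) (Z : ℕ → ℝ)
      (hZ : ∀ i : Fin n, Z i.val = z i),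
      ∏ j ∈ Finset.range (m + 1), Z j = ∏ i ∈ Finset.Iic (⟨m, hm⟩ : Fin n), z i := by
    intro m hm z Z hZ
    rw [hrange m hm, Finset.prod_map]
    exact Finset.prod_congr rfl fun i _ => hZ i
  have hXv : ∀ i : Fin n, X' i.val = x i := fun i => by simp [hX', i.isLt]
  have hYv : ∀ i : Fin n, Y' i.val = y i := fun i => by simp [hY', i.isLt]
  have hmaj' : ∀ k ≤ n, ∏ i ∈ Finset.range k, Y' i ≤ ∏ i ∈ Finset.range k, X' i := by
    intro k hk
    match k with
    | 0 => simp
    | m + 1 =>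
      have hm : m < n := by omega
      rw [hbridge m hm y Y' hYv, hbridge m hm x X' hXv]
      exact hmaj ⟨m, hm⟩
  have hmain := prod_one_add_le n X' Y' hY'anti hY'0 hX'0 hmaj'
  rw [Finset.prod_range, Finset.prod_range] at hmain
  calc ∏ i, (1 + y i) = ∏ i : Fin n, (1 + Y' i.val) :=
        Finset.prod_congr rfl fun i _ => by rw [hYv]
    _ ≤ ∏ i : Fin n, (1 + X' i.val) := hmain
    _ = ∏ i, (1 + x i) := Finset.prod_congr rfl fun i _ => by rw [hXv]
end

section
/- Let H be an n×n complex positive definite matrix and X an m×n complex matrix. Then ‖X‖² ≤ ‖H‖ · ‖XH^{-1}X*‖, where ‖·‖ denotes the spectral norm. -/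
open scoped ComplexOrder Matrix

/-- The spectral norm of a (rectangular) complex matrix: the operator norm of the
induced linear map between Euclidean spaces, i.e. the largest singular value. -/
noncomputable def specNorm {m n : ℕ} (X : Matrix (Fin m) (Fin n) ℂ) : ℝ :=
  ‖LinearMap.toContinuousLinearMap (Matrix.toEuclideanLin X)‖

open scoped Matrix.Norms.L2Operator in
lemma specNorm_eq {m n : ℕ} (X : Matrix (Fin m) (Fin n) ℂ) : specNorm X = ‖X‖ :=
  (Matrix.l2_opNorm_def X).symm

open scoped Matrix.Norms.L2Operator MatrixOrder in
/-- If `H` is positive definite (n×n) and `X` is any m×n matrix, then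
`‖X‖² ≤ ‖H‖ ⬝ ‖X H⁻¹ Xᴴ‖` for the spectral norm. -/
theorem sq_specNorm_le_specNorm_mul {m n : ℕ} (H : Matrix (Fin n) (Fin n) ℂ)
    (hH : H.PosDef) (X : Matrix (Fin m) (Fin n) ℂ) :
    specNorm X ^ 2 ≤ specNorm H * specNorm (X * H⁻¹ * Xᴴ) := by
  simp only [specNorm_eq]
  set S := CFC.sqrt H with hSdef
  have hS : S.PosSemidef := Matrix.nonneg_iff_posSemidef.mp (CFC.sqrt_nonneg H)
  have hSS : S * S = H := CFC.sqrt_mul_sqrt_self H hH.posSemidef.nonneg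
  have hHu : IsUnit H.det := hH.isUnit.map (Matrix.detMonoidHom)
  have hSu : IsUnit S.det := by
    have : IsUnit (S.det * S.det) := by
      rw [← Matrix.det_mul, hSS]; exact hHu
    exact isUnit_of_mul_isUnit_left this
  have hSinv : S⁻¹ * S = 1 := Matrix.nonsing_inv_mul S hSu
  have hSH : (S⁻¹)ᴴ = S⁻¹ := by
    rw [Matrix.conjTranspose_nonsing_inv, hS.1]
  have hHinv : H⁻¹ = S⁻¹ * S⁻¹ := by
    rw [← hSS, Matrix.mul_inv_rev]
  -- key decomposition
  have hXdec : X = X * S⁻¹ * S := by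
    rw [Matrix.mul_assoc, hSinv, Matrix.mul_one]
  have h1 : ‖X‖ ≤ ‖X * S⁻¹‖ * ‖S‖ := by
    calc ‖X‖ = ‖X * S⁻¹ * S‖ := by rw [← hXdec]
    _ ≤ ‖X * S⁻¹‖ * ‖S‖ := Matrix.l2_opNorm_mul _ _
  have hHnorm : ‖H‖ = ‖S‖ * ‖S‖ := by
    have h := Matrix.l2_opNorm_conjTranspose_mul_self S
    rw [hS.1, hSS] at h
    exact h
  have hXnorm : ‖X * H⁻¹ * Xᴴ‖ = ‖X * S⁻¹‖ * ‖X * S⁻¹‖ := by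
    have : X * H⁻¹ * Xᴴ = ((X * S⁻¹)ᴴ)ᴴ * (X * S⁻¹)ᴴ := by
      rw [Matrix.conjTranspose_conjTranspose, Matrix.conjTranspose_mul, hSH, hHinv]
      simp only [Matrix.mul_assoc]
    rw [this, Matrix.l2_opNorm_conjTranspose_mul_self,
      Matrix.l2_opNorm_conjTranspose]
  calc ‖X‖ ^ 2 ≤ (‖X * S⁻¹‖ * ‖S‖) ^ 2 := by
        apply pow_le_pow_left₀ (norm_nonneg _) h1
  _ = ‖H‖ * ‖X * H⁻¹ * Xᴴ‖ := by rw [hHnorm, hXnorm]; ring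
end

section
/- Let A and B be n×n complex positive definite matrices and A♯B := A^{1/2}(A^{-1/2}BA^{-1/2})^{1/2}A^{1/2}. Then ‖A♯B‖ ≤ λ₁(A^{1/2}B^{1/2}), where ‖·‖ is the spectral norm and λ₁(A^{1/2}B^{1/2}) is the largest eigenvalue of A^{1/2}B^{1/2} (all of whose eigenvalues are real and nonnegative since A^{1/2}B^{1/2} is similar to the positive semidefinite matrix B^{1/4}A^{1/2}B^{1/4}). -/
open scoped ComplexOrder Matrix Classical

/-- The geometric mean `A ♯ B := A^{1/2} (A^{-1/2} B A^{-1/2})^{1/2} A^{1/2}` of positive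
definite matrices. -/
noncomputable def geomMean {n : ℕ} (A B : Matrix (Fin n) (Fin n) ℂ) :
    Matrix (Fin n) (Fin n) ℂ :=
  sqrtm A * sqrtm ((sqrtm A)⁻¹ * B * (sqrtm A)⁻¹) * sqrtm A


section Helpers

open Matrix Polynomial
set_option linter.unusedSectionVars false
set_option maxHeartbeats 1000000

variable {n : Type*} [Fintype n] [DecidableEq n]

/-- The eigenvalue-formula square root of a positive semidefinite matrix. -/
noncomputable def Matrix.PosSemidef.sqrt {A : Matrix n n ℂ} (h : A.PosSemidef) : Matrix n n ℂ :=
  (h.1.eigenvectorUnitary : Matrix n n ℂ) *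
    Matrix.diagonal ((↑) ∘ Real.sqrt ∘ h.1.eigenvalues) *
    (star h.1.eigenvectorUnitary : Matrix n n ℂ)

open scoped MatrixOrder in
lemma Matrix.PosSemidef.sqrt_eq_cfc_sqrt {A : Matrix n n ℂ} (h : A.PosSemidef) :
    h.sqrt = CFC.sqrt A := by
  rw [CFC.sqrt_eq_cfc, cfc_nnreal_eq_real _ A h.nonneg, h.1.cfc_eq]
  simp only [IsHermitian.cfc, Unitary.conjStarAlgAut_apply, Matrix.PosSemidef.sqrt]
  congr 3
  funext i
  simp only [Function.comp_apply, Real.coe_sqrt, Real.coe_toNNReal', max_eq_left (h.eigenvalues_nonneg i)]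
  rfl

open scoped MatrixOrder in
lemma Matrix.PosSemidef.posSemidef_sqrt {A : Matrix n n ℂ} (h : A.PosSemidef) :
    h.sqrt.PosSemidef := by
  rw [h.sqrt_eq_cfc_sqrt]
  exact (CFC.sqrt_nonneg A).posSemidef

open scoped MatrixOrder in
lemma Matrix.PosSemidef.sqrt_mul_self {A : Matrix n n ℂ} (h : A.PosSemidef) :
    h.sqrt * h.sqrt = A := by
  rw [h.sqrt_eq_cfc_sqrt]
  exact CFC.sqrt_mul_sqrt_self A h.nonneg

open scoped MatrixOrder in
lemma Matrix.PosSemidef.eq_sqrt_of_sq_eq {A B : Matrix n n ℂ} (hA : A.PosSemidef)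
    (hB : B.PosSemidef) (hAB : A ^ 2 = B) : A = hB.sqrt := by
  rw [hB.sqrt_eq_cfc_sqrt]
  exact (CFC.sqrt_unique (by rw [← pow_two]; exact hAB) hA.nonneg).symm


lemma psd_conj {X Y : Matrix n n ℂ} (h : (Y - X).PosSemidef) (M : Matrix n n ℂ) :
    (M * Y * Mᴴ - M * X * Mᴴ).PosSemidef := by
  have := h.mul_mul_conjTranspose_same M
  simpa [Matrix.mul_sub, Matrix.sub_mul] using this

lemma charpoly_eval (M : Matrix n n ℂ) (t : ℂ) :
    (M.charpoly).eval t = (t • (1 : Matrix n n ℂ) - M).det := by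
  rw [Matrix.charpoly, ← Polynomial.coe_evalRingHom, RingHom.map_det]
  congr 1
  ext i j
  by_cases h : i = j <;>
    simp [h, charmatrix_apply, Matrix.one_apply, Matrix.diagonal_apply]

lemma psd_posDef_of_det {M : Matrix n n ℂ} (hM : M.PosSemidef) (h : IsUnit M.det) :
    M.PosDef := by
  refine posDef_iff_dotProduct_mulVec.mpr ⟨hM.1, fun v hv => (hM.dotProduct_mulVec_nonneg v).lt_of_ne' fun h0 => hv ?_⟩
  have hMv : M *ᵥ v = 0 := (hM.dotProduct_mulVec_zero_iff v).mp h0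
  have : M⁻¹ *ᵥ (M *ᵥ v) = v := by
    rw [mulVec_mulVec, Matrix.nonsing_inv_mul _ h, one_mulVec]
  rw [hMv, mulVec_zero] at this
  exact this.symm

lemma herm_le_smul_one {P : Matrix n n ℂ} (hP : P.IsHermitian) {t : ℝ}
    (h : ∀ i, hP.eigenvalues i ≤ t) : ((t : ℂ) • 1 - P).PosSemidef := by
  have hd : PosSemidef (diagonal (fun i => ((t - hP.eigenvalues i : ℝ) : ℂ))) := by
    refine PosSemidef.diagonal fun i => ?_
    show (0 : ℂ) ≤ _
    exact Complex.zero_le_real.mpr (by linarith [h i])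
  have h2 := hd.mul_mul_conjTranspose_same (hP.eigenvectorUnitary : Matrix n n ℂ)
  have key : (hP.eigenvectorUnitary : Matrix n n ℂ) *
      diagonal (fun i => ((t - hP.eigenvalues i : ℝ) : ℂ)) *
      (hP.eigenvectorUnitary : Matrix n n ℂ)ᴴ = (t : ℂ) • 1 - P := by
    have hdsub : diagonal (fun i => ((t - hP.eigenvalues i : ℝ) : ℂ)) =
        (t : ℂ) • 1 - diagonal (Complex.ofReal ∘ hP.eigenvalues) := by
      ext i j
      by_cases h' : i = j
      · simp [h', Matrix.one_apply]
      · simp [h', Matrix.one_apply]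
    rw [hdsub, Matrix.mul_sub, Matrix.sub_mul]
    congr 1
    · rw [Matrix.mul_smul, Matrix.smul_mul, Matrix.mul_one]
      congr 1
      exact (Matrix.mem_unitaryGroup_iff).mp (hP.eigenvectorUnitary).2
    · conv_rhs => rw [hP.spectral_theorem]
      rfl
  rwa [key] at h2


lemma sqrt_mono {X Y : Matrix n n ℂ} (hX : X.PosSemidef) (hY : Y.PosSemidef)
    (h : (Y - X).PosSemidef) : (hY.sqrt - hX.sqrt).PosSemidef := by
  set S := hX.sqrt with hSdef
  set T := hY.sqrt with hTdef
  have hS := hX.posSemidef_sqrt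
  have hT := hY.posSemidef_sqrt
  rw [← hSdef] at hS
  rw [← hTdef] at hT
  have hD : (T - S).IsHermitian := hT.1.sub hS.1
  refine hD.posSemidef_iff_eigenvalues_nonneg.mpr fun j => ?_
  set t := hD.eigenvalues j with htdef
  set v : n → ℂ := ⇑(hD.eigenvectorBasis j) with hvdef
  have hv : (T - S) *ᵥ v = (t : ℂ) • v := by
    have h1 := hD.mulVec_eigenvectorBasis j
    rw [← hvdef, ← htdef] at h1
    rw [h1]
    ext i
    simp [Complex.real_smul]
  have hvne : v ≠ 0 := by
    have h0 := hD.eigenvectorBasis.orthonormal.ne_zero j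
    intro hc
    exact h0 (by ext i; exact congrFun hc i)
  by_contra ht
  push_neg at ht
  have hvstar : star v ᵥ* (T - S) = (t : ℂ) • star v := by
    have h2 := congrArg star hv
    rw [star_mulVec, hD.eq, star_smul] at h2
    simpa using h2
  have key : star v ⬝ᵥ ((Y - X) *ᵥ v)
      = (t : ℂ) * (star v ⬝ᵥ (T *ᵥ v) + star v ⬝ᵥ (S *ᵥ v)) := by
    have hYX : Y - X = T * (T - S) + (T - S) * S := by
      have hT2 : T * T = Y := hY.sqrt_mul_self
      have hS2 : S * S = X := hX.sqrt_mul_self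
      rw [← hT2, ← hS2]; noncomm_ring
    have hterm2 : star v ⬝ᵥ (((T - S) * S) *ᵥ v) = (t : ℂ) * (star v ⬝ᵥ (S *ᵥ v)) := by
      rw [← mulVec_mulVec, dotProduct_mulVec, hvstar, smul_dotProduct, smul_eq_mul]
    rw [hYX, Matrix.add_mulVec, dotProduct_add, ← mulVec_mulVec, hv, mulVec_smul,
      dotProduct_smul, hterm2, smul_eq_mul]
    ring
  have hTv := hT.dotProduct_mulVec_nonneg v
  have hSv := hS.dotProduct_mulVec_nonneg v
  have hineq := h.dotProduct_mulVec_nonneg v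
  rw [key] at hineq
  set a := star v ⬝ᵥ (T *ᵥ v)
  set b := star v ⬝ᵥ (S *ᵥ v)
  have hab : 0 ≤ a + b := add_nonneg hTv hSv
  have hre : 0 ≤ t * (a + b).re := by
    have := (Complex.le_def.mp hineq).1
    simpa [Complex.mul_re] using this
  have hrr : (0 : ℝ) ≤ (a + b).re := by simpa using (Complex.le_def.mp hab).1
  have hle : (a + b).re ≤ 0 := by
    by_contra h'
    push_neg at h'
    have : t * (a + b).re < 0 := mul_neg_of_neg_of_pos ht h'
    linarith
  have habzero : a + b = 0 := by
    have him := (Complex.le_def.mp hab).2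
    apply Complex.ext
    · simp only [Complex.zero_re]; linarith
    · simpa using him.symm
  have hazero : a = 0 ∧ b = 0 := (add_eq_zero_iff_of_nonneg hTv hSv).mp habzero
  have hTv0 : T *ᵥ v = 0 := (hT.dotProduct_mulVec_zero_iff v).mp hazero.1
  have hSv0 : S *ᵥ v = 0 := (hS.dotProduct_mulVec_zero_iff v).mp hazero.2
  rw [Matrix.sub_mulVec, hTv0, hSv0, sub_zero] at hv
  have : (t : ℂ) = 0 ∨ v = 0 := smul_eq_zero.mp hv.symm
  rcases this with h' | h'
  · exact absurd (by exact_mod_cast h' : t = 0) (ne_of_lt ht)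
  · exact hvne h'


lemma psd_smul {M : Matrix n n ℂ} (hM : M.PosSemidef) {r : ℝ} (hr : 0 ≤ r) :
    ((r : ℂ) • M).PosSemidef := by
  refine posSemidef_iff_dotProduct_mulVec.mpr ⟨?_, ?_⟩
  · show _ = _
    rw [conjTranspose_smul, hM.1.eq]
    simp
  · intro v
    rw [smul_mulVec, dotProduct_smul, smul_eq_mul]
    exact mul_nonneg (by exact_mod_cast hr) (hM.dotProduct_mulVec_nonneg v)

lemma sq_le_of_le_smul_one {C : Matrix n n ℂ} (hC : C.PosSemidef) {μ : ℝ} (hμ : 0 ≤ μ)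
    (h : ((μ : ℂ) • 1 - C).PosSemidef) : (((μ ^ 2 : ℝ) : ℂ) • 1 - C * C).PosSemidef := by
  set s := hC.sqrt with hsdef
  have hs := hC.posSemidef_sqrt
  rw [← hsdef] at hs
  have hss : s * s = C := hC.sqrt_mul_self
  have h1 : (s * ((μ : ℂ) • 1 - C) * sᴴ).PosSemidef := h.mul_mul_conjTranspose_same s
  have e1 : s * ((μ : ℂ) • 1 - C) * sᴴ = (μ : ℂ) • C - C * C := by
    rw [hs.1.eq, Matrix.mul_sub, Matrix.sub_mul, Matrix.mul_smul, Matrix.smul_mul,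
      Matrix.mul_one, hss]
    congr 1
    rw [← hss]
    noncomm_ring
  rw [e1] at h1
  have h2 : ((μ : ℂ) • ((μ : ℂ) • 1 - C)).PosSemidef := by
    have := psd_smul h hμ
    exact this
  have e2 : (μ : ℂ) • ((μ : ℂ) • 1 - C) = ((μ ^ 2 : ℝ) : ℂ) • 1 - (μ : ℂ) • C := by
    rw [smul_sub, smul_smul]
    push_cast
    ring_nf
  rw [e2] at h2
  have := h2.add h1
  simpa using this

lemma norm_sq_eq_re_dot {m : ℕ} (w : EuclideanSpace ℂ (Fin m)) :
    ‖w‖ ^ 2 = Complex.re (star (w : Fin m → ℂ) ⬝ᵥ (w : Fin m → ℂ)) := by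
  rw [EuclideanSpace.norm_eq, Real.sq_sqrt (by positivity)]
  rw [dotProduct, Complex.re_sum]
  congr 1
  ext i
  simp [Complex.mul_re, Complex.normSq_apply, sq]
  rw [← Complex.normSq_apply, Complex.normSq_eq_norm_sq, sq]


lemma specNorm_le_of_le_smul_one {m : ℕ} {G : Matrix (Fin m) (Fin m) ℂ} (hG : G.PosSemidef)
    {l : ℝ} (hl : 0 ≤ l) (h : ((l : ℂ) • 1 - G).PosSemidef) : specNorm G ≤ l := by
  refine ContinuousLinearMap.opNorm_le_bound _ hl fun v => ?_
  have hsq := sq_le_of_le_smul_one hG hl h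
  have hdot := hsq.dotProduct_mulVec_nonneg (v : Fin m → ℂ)
  rw [Matrix.sub_mulVec, dotProduct_sub, smul_mulVec, dotProduct_smul] at hdot
  have hre := (Complex.le_def.mp hdot).1
  simp only [Complex.zero_re, Complex.sub_re, Complex.smul_re] at hre
  -- hre : 0 ≤ re ((l^2:ℂ) • (star v ⬝ᵥ 1 *ᵥ v)) - re (star v ⬝ᵥ (G*G) *ᵥ v)
  have key : ‖(LinearMap.toContinuousLinearMap (Matrix.toEuclideanLin G)) v‖ ^ 2
      ≤ (l * ‖v‖) ^ 2 := by
    have happ : ((LinearMap.toContinuousLinearMap (Matrix.toEuclideanLin G)) v : Fin m → ℂ)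
        = G *ᵥ (v : Fin m → ℂ) := by
      simp [Matrix.toEuclideanLin_apply]
    rw [norm_sq_eq_re_dot, happ]
    have hGG : star (G *ᵥ (v : Fin m → ℂ)) ⬝ᵥ (G *ᵥ (v : Fin m → ℂ))
        = star (v : Fin m → ℂ) ⬝ᵥ ((G * G) *ᵥ (v : Fin m → ℂ)) := by
      rw [star_mulVec, ← dotProduct_mulVec, hG.1.eq, mulVec_mulVec]
    rw [hGG]
    have hnv : ‖v‖ ^ 2 = Complex.re (star (v : Fin m → ℂ) ⬝ᵥ (v : Fin m → ℂ)) :=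
      norm_sq_eq_re_dot v
    have h1v : (1 : Matrix (Fin m) (Fin m) ℂ) *ᵥ (v : Fin m → ℂ) = (v : Fin m → ℂ) :=
      Matrix.one_mulVec _
    rw [h1v] at hre
    rw [mul_pow, hnv]
    have : Complex.re (((l ^ 2 : ℝ) : ℂ) • (star (v : Fin m → ℂ) ⬝ᵥ (v : Fin m → ℂ)))
        = l ^ 2 * Complex.re (star (v : Fin m → ℂ) ⬝ᵥ (v : Fin m → ℂ)) := by
      simp [smul_eq_mul, Complex.mul_re, ← Complex.ofReal_pow]
    rw [h1v] at hdot
    linarith [hre, this ▸ hre]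
  calc ‖(LinearMap.toContinuousLinearMap (Matrix.toEuclideanLin G)) v‖
      = Real.sqrt (‖(LinearMap.toContinuousLinearMap (Matrix.toEuclideanLin G)) v‖ ^ 2) :=
        (Real.sqrt_sq (norm_nonneg _)).symm
    _ ≤ Real.sqrt ((l * ‖v‖) ^ 2) := Real.sqrt_le_sqrt key
    _ = l * ‖v‖ := Real.sqrt_sq (by positivity)

lemma core {H K R : Matrix n n ℂ} [Invertible H] [Invertible R]
    (hH : H.PosSemidef) (hR : R.PosSemidef)
    (hRK : R * R = K) {l : ℝ} (hl : 0 ≤ l)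
    (hP : ((l : ℂ) • 1 - R * H * R).PosSemidef)
    (hV : (⅟H * (K * K) * ⅟H).PosSemidef) :
    ((l : ℂ) • 1 - H * hV.sqrt * H).PosSemidef := by
  have hiR : (⅟R)ᴴ = ⅟R := by
    rw [invOf_eq_nonsing_inv, Matrix.conjTranspose_nonsing_inv, hR.1.eq]
  have hiH : (⅟H)ᴴ = ⅟H := by
    rw [invOf_eq_nonsing_inv, Matrix.conjTranspose_nonsing_inv, hH.1.eq]
  set μ := Real.sqrt l with hμdef
  have hμ : 0 ≤ μ := Real.sqrt_nonneg l
  have hμ2 : μ ^ 2 = l := Real.sq_sqrt hl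
  -- W = ⅟R * H * ⅟R
  have hW : (⅟R * H * ⅟R).PosSemidef := by
    have := hH.mul_mul_conjTranspose_same (⅟R)
    rwa [hiR] at this
  set D := hW.sqrt with hDdef
  have hDpsd : D.PosSemidef := hW.posSemidef_sqrt
  have hDD : D * D = ⅟R * H * ⅟R := hW.sqrt_mul_self
  -- step 2 : conj hP by ⅟R * ⅟R
  have h2 : (((l : ℂ) • ((⅟R * ⅟R) * (⅟R * ⅟R)) - ⅟R * H * ⅟R)).PosSemidef := by
    have := psd_conj hP (⅟R * ⅟R)
    have e1 : (⅟R * ⅟R) * ((l : ℂ) • 1) * (⅟R * ⅟R)ᴴ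
        = (l : ℂ) • ((⅟R * ⅟R) * (⅟R * ⅟R)) := by
      rw [conjTranspose_mul, hiR, Matrix.mul_smul, Matrix.smul_mul, Matrix.mul_one]
    have e2 : (⅟R * ⅟R) * (R * H * R) * (⅟R * ⅟R)ᴴ = ⅟R * H * ⅟R := by
      rw [conjTranspose_mul, hiR]
      simp only [mul_assoc, mul_invOf_cancel_left, invOf_mul_cancel_left, invOf_mul_self, mul_invOf_self, mul_one, one_mul]
    rwa [e1, e2] at this
  -- step 3 : D ≤ μ • (⅟R * ⅟R)
  have hNN : ((⅟R * ⅟R) * (⅟R * ⅟R)).PosSemidef := by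
    have := Matrix.posSemidef_self_mul_conjTranspose (⅟R * ⅟R)
    rwa [conjTranspose_mul, hiR] at this
  have hY3 : ((l : ℂ) • ((⅟R * ⅟R) * (⅟R * ⅟R))).PosSemidef := psd_smul hNN hl
  have hsqY3 : ((μ : ℂ) • (⅟R * ⅟R)) = hY3.sqrt := by
    have hμN : ((μ : ℂ) • (⅟R * ⅟R)).PosSemidef := by
      have h' : (⅟R * (⅟R)ᴴ).PosSemidef := Matrix.posSemidef_self_mul_conjTranspose (⅟R)
      rw [hiR] at h'
      exact psd_smul h' hμ
    refine hμN.eq_sqrt_of_sq_eq hY3 ?_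
    rw [pow_two, Matrix.smul_mul, Matrix.mul_smul, smul_smul]
    rw [← Complex.ofReal_mul, ← pow_two, hμ2]
  have h3 : (((μ : ℂ) • (⅟R * ⅟R)) - D).PosSemidef := by
    have := sqrt_mono hW hY3 h2
    rwa [← hsqY3, ← hDdef] at this
  -- step 4 : C := R * D * R,   μ•1 - C psd
  set C := R * D * R with hCdef
  have hC1 : ((μ : ℂ) • 1 - C).PosSemidef := by
    have := psd_conj h3 R
    have e1 : R * ((μ : ℂ) • (⅟R * ⅟R)) * Rᴴ = (μ : ℂ) • 1 := by
      rw [hR.1.eq, Matrix.mul_smul, Matrix.smul_mul]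
      congr 1
      simp only [mul_assoc, mul_invOf_cancel_left, invOf_mul_cancel_left, invOf_mul_self, mul_invOf_self, mul_one, one_mul]
    have e2 : R * D * Rᴴ = C := by rw [hR.1.eq]
    rwa [e1, e2] at this
  have hCpsd : C.PosSemidef := by
    have := hDpsd.mul_mul_conjTranspose_same R
    rwa [hR.1.eq] at this
  -- C invertible
  have hdetW : IsUnit (⅟R * H * ⅟R).det := by
    rw [Matrix.det_mul, Matrix.det_mul]
    exact ((Matrix.isUnit_det_of_invertible (⅟R)).mul
      (Matrix.isUnit_det_of_invertible H)).mul (Matrix.isUnit_det_of_invertible (⅟R))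
  have hdetD : IsUnit D.det := by
    have : D.det * D.det = (⅟R * H * ⅟R).det := by rw [← Matrix.det_mul, hDD]
    exact isUnit_of_mul_isUnit_left (this ▸ hdetW)
  have hdetC : IsUnit C.det := by
    rw [hCdef, Matrix.det_mul, Matrix.det_mul]
    exact ((Matrix.isUnit_det_of_invertible R).mul hdetD).mul
      (Matrix.isUnit_det_of_invertible R)
  haveI iC : Invertible C := C.invertibleOfIsUnitDet hdetC
  haveI iK : Invertible K := hRK ▸ (invertibleMul R R)
  have hinvK : ⅟K = ⅟R * ⅟R := by
    have h1 : K * (⅟R * ⅟R) = 1 := by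
      rw [← hRK]; simp only [mul_assoc, mul_invOf_cancel_left, mul_invOf_self]
    exact invOf_eq_right_inv h1
  -- step 5 : C * ⅟K * C = H
  have hCK : C * ⅟K * C = H := by
    rw [hinvK, hCdef]
    calc R * D * R * (⅟R * ⅟R) * (R * D * R)
        = R * (D * D) * R := by
          simp only [mul_assoc, mul_invOf_cancel_left, invOf_mul_cancel_left, invOf_mul_self, mul_invOf_self, mul_one, one_mul]
      _ = H := by
          rw [hDD]
          simp only [mul_assoc, mul_invOf_cancel_left, invOf_mul_cancel_left, invOf_mul_self, mul_invOf_self, mul_one, one_mul]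
  -- step 6 : C * ⅟H * C = K
  have hinvK2 : ⅟K = ⅟C * H * ⅟C := by
    have := congrArg (fun X => ⅟C * X * ⅟C) hCK
    rw [← this]
    simp only [mul_assoc, mul_invOf_cancel_left, invOf_mul_cancel_left, invOf_mul_self, mul_invOf_self, mul_one, one_mul]
  have hKC : C * ⅟H * C = K := by
    have h6 : (C * ⅟H * C) * ⅟K = 1 := by
      rw [hinvK2]
      simp only [mul_assoc, mul_invOf_cancel_left, invOf_mul_cancel_left, invOf_mul_self, mul_invOf_self, mul_one, one_mul]
    calc C * ⅟H * C = ((C * ⅟H * C) * ⅟K) * K := by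
          simp only [mul_assoc, mul_invOf_cancel_left, invOf_mul_cancel_left, invOf_mul_self, mul_invOf_self, mul_one, one_mul]
      _ = K := by rw [h6, one_mul]
  -- step 7 : V = N₂ * (C * C) * N₂
  have e7 : ⅟H * (K * K) * ⅟H = (⅟H * C * ⅟H) * (C * C) * (⅟H * C * ⅟H) := by
    rw [← hKC]
    simp only [mul_assoc]
  -- step 8
  have hCC : ((l : ℂ) • 1 - C * C).PosSemidef := by
    have := sq_le_of_le_smul_one hCpsd hμ hC1
    rwa [hμ2] at this
  -- step 9 : conj by N₂
  have hN2H : (⅟H * C * ⅟H)ᴴ = ⅟H * C * ⅟H := by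
    simp only [conjTranspose_mul, hiH, hCpsd.1.eq]
    simp only [← mul_assoc]
  have h9 : ((l : ℂ) • ((⅟H * C * ⅟H) * (⅟H * C * ⅟H)) - ⅟H * (K * K) * ⅟H).PosSemidef := by
    have := psd_conj hCC (⅟H * C * ⅟H)
    have e1 : (⅟H * C * ⅟H) * ((l : ℂ) • 1) * (⅟H * C * ⅟H)ᴴ
        = (l : ℂ) • ((⅟H * C * ⅟H) * (⅟H * C * ⅟H)) := by
      rw [hN2H, Matrix.mul_smul, Matrix.smul_mul, Matrix.mul_one]
    have e2 : (⅟H * C * ⅟H) * (C * C) * (⅟H * C * ⅟H)ᴴ = ⅟H * (K * K) * ⅟H := by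
      rw [hN2H, ← e7]
    rwa [e1, e2] at this
  -- step 10 : sqrt mono
  have hN2psd : (⅟H * C * ⅟H).PosSemidef := by
    have := hCpsd.mul_mul_conjTranspose_same (⅟H)
    rwa [hiH] at this
  have hNN2 : ((⅟H * C * ⅟H) * (⅟H * C * ⅟H)).PosSemidef := by
    have := Matrix.posSemidef_self_mul_conjTranspose (⅟H * C * ⅟H)
    rwa [hN2H] at this
  have hY10 : ((l : ℂ) • ((⅟H * C * ⅟H) * (⅟H * C * ⅟H))).PosSemidef := psd_smul hNN2 hl
  have hsqY10 : ((μ : ℂ) • (⅟H * C * ⅟H)) = hY10.sqrt := by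
    have hμN : ((μ : ℂ) • (⅟H * C * ⅟H)).PosSemidef := psd_smul hN2psd hμ
    refine hμN.eq_sqrt_of_sq_eq hY10 ?_
    rw [pow_two, Matrix.smul_mul, Matrix.mul_smul, smul_smul]
    rw [← Complex.ofReal_mul, ← pow_two, hμ2]
  have h10 : (((μ : ℂ) • (⅟H * C * ⅟H)) - hV.sqrt).PosSemidef := by
    have := sqrt_mono hV hY10 h9
    rwa [← hsqY10] at this
  -- step 11 : conj by H
  have h11 : ((μ : ℂ) • C - H * hV.sqrt * H).PosSemidef := by
    have := psd_conj h10 H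
    have e1 : H * ((μ : ℂ) • (⅟H * C * ⅟H)) * Hᴴ = (μ : ℂ) • C := by
      rw [hH.1.eq, Matrix.mul_smul, Matrix.smul_mul]
      congr 1
      simp only [mul_assoc, mul_invOf_cancel_left, invOf_mul_cancel_left, invOf_mul_self, mul_invOf_self, mul_one, one_mul]
    have e2 : H * hV.sqrt * Hᴴ = H * hV.sqrt * H := by rw [hH.1.eq]
    rwa [e1, e2] at this
  -- step 12
  have h12 : ((l : ℂ) • 1 - (μ : ℂ) • C).PosSemidef := by
    have := psd_smul hC1 hμ
    have e : (μ : ℂ) • ((μ : ℂ) • 1 - C) = (l : ℂ) • 1 - (μ : ℂ) • C := by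
      rw [smul_sub, smul_smul, ← Complex.ofReal_mul, ← pow_two, hμ2]
    rwa [e] at this
  have := h12.add h11
  simpa using this

end Helpers

/-- For positive definite `A, B`, `‖A ♯ B‖ ≤ λ₁(A^{1/2} B^{1/2})`: the spectral norm of the
geometric mean is at most the largest eigenvalue of `A^{1/2} B^{1/2}` (whose eigenvalues are
all real, as witnessed by a factorization of its characteristic polynomial over a real
vector `x`; its largest eigenvalue is then `⨆ i, x i`). -/
theorem specNorm_geomMean_le_max_eigenvalue {n : ℕ}
    (A B : Matrix (Fin n) (Fin n) ℂ) (hA : A.PosDef) (hB : B.PosDef)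
    (x : Fin n → ℝ)
    (hx : (sqrtm A * sqrtm B).charpoly = ∏ i, (Polynomial.X - Polynomial.C (x i : ℂ))) :
    specNorm (geomMean A B) ≤ ⨆ i, x i := by
  rcases n with _ | m
  · -- trivial case n = 0
    rw [Real.iSup_of_isEmpty]
    refine ContinuousLinearMap.opNorm_le_bound _ le_rfl fun v => ?_
    have hv : v = 0 := Subsingleton.elim v 0
    rw [hv]; simp
  set l := ⨆ i, x i with hldef
  set H := sqrtm A with hHdef
  set K := sqrtm B with hKdef
  set R := sqrtm K with hRdef
  have hA' := hA.posSemidef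
  have hB' := hB.posSemidef
  have hHeq : H = hA'.sqrt := dif_pos hA'
  have hH : (H).PosSemidef := by rw [hHeq]; exact hA'.posSemidef_sqrt
  have hHH : H * H = A := by rw [hHeq]; exact hA'.sqrt_mul_self
  have hKeq : K = hB'.sqrt := dif_pos hB'
  have hK : (K).PosSemidef := by rw [hKeq]; exact hB'.posSemidef_sqrt
  have hKK : K * K = B := by rw [hKeq]; exact hB'.sqrt_mul_self
  have hReq : R = hK.sqrt := dif_pos hK
  have hR : (R).PosSemidef := by rw [hReq]; exact hK.posSemidef_sqrt
  have hRK : R * R = K := by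
    rw [hReq]; exact hK.sqrt_mul_self
  -- invertibility
  have hdetH : IsUnit (H).det := by
    have h1 : (H).det * (H).det = A.det := by rw [← Matrix.det_mul, hHH]
    exact isUnit_of_mul_isUnit_left (h1 ▸ (isUnit_iff_ne_zero.mpr hA.det_pos.ne'))
  have hdetK : IsUnit (K).det := by
    have h1 : (K).det * (K).det = B.det := by rw [← Matrix.det_mul, hKK]
    exact isUnit_of_mul_isUnit_left (h1 ▸ (isUnit_iff_ne_zero.mpr hB.det_pos.ne'))
  have hdetR : IsUnit (R).det := by
    have h1 : (R).det * (R).det = (K).det := by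
      rw [← Matrix.det_mul, hRK]
    exact isUnit_of_mul_isUnit_left (h1 ▸ hdetK)
  haveI iH : Invertible (H) := (H).invertibleOfIsUnitDet hdetH
  haveI iR : Invertible (R) := (R).invertibleOfIsUnitDet hdetR
  -- the matrix P = R H R and its eigenvalues
  have hPpsd : (R * H * R).PosSemidef := by
    have := hH.mul_mul_conjTranspose_same (R)
    rwa [hR.1.eq] at this
  have heig : ∀ j, ∃ i, hPpsd.1.eigenvalues j = x i := by
    intro j
    set t := hPpsd.1.eigenvalues j with htdef
    set v : Fin (m + 1) → ℂ := ⇑(hPpsd.1.eigenvectorBasis j) with hvdef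
    have hv : (R * H * R) *ᵥ v = (t : ℂ) • v := by
      have h1 := hPpsd.1.mulVec_eigenvectorBasis j
      rw [← hvdef, ← htdef] at h1
      rw [h1]; ext i; simp [Complex.real_smul]
    have hvne : v ≠ 0 := by
      have h0 := hPpsd.1.eigenvectorBasis.orthonormal.ne_zero j
      intro hc
      exact h0 (by ext i; exact congrFun hc i)
    have hdet0 : ((t : ℂ) • 1 - (R * H * R)).det = 0 := by
      rw [← Matrix.exists_mulVec_eq_zero_iff]
      refine ⟨v, hvne, ?_⟩
      rw [Matrix.sub_mulVec, Matrix.smul_mulVec, Matrix.one_mulVec, hv, sub_self]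
    have hfac : (t : ℂ) • 1 - (R * H * R)
        = R * ((t : ℂ) • 1 - H * K) * ⅟(R) := by
      rw [Matrix.mul_sub, Matrix.sub_mul]
      congr 1
      · rw [Matrix.mul_smul, Matrix.mul_one, Matrix.smul_mul, mul_invOf_self]
      · rw [← hRK]
        simp only [mul_assoc, mul_invOf_cancel_left, invOf_mul_cancel_left, invOf_mul_self,
          mul_invOf_self, mul_one, one_mul]
    have hdetS : ((t : ℂ) • 1 - H * K).det = 0 := by
      rw [hfac, Matrix.det_mul, Matrix.det_mul] at hdet0
      rcases mul_eq_zero.mp hdet0 with h' | h'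
      · rcases mul_eq_zero.mp h' with h'' | h''
        · exact absurd h'' hdetR.ne_zero
        · exact h''
      · exact absurd h' (Matrix.isUnit_det_of_invertible _).ne_zero
    have heval : ((H * K).charpoly).eval (t : ℂ) = 0 := by
      rw [charpoly_eval]; exact hdetS
    rw [hx, Polynomial.eval_prod] at heval
    obtain ⟨i, -, hi⟩ := Finset.prod_eq_zero_iff.mp heval
    rw [Polynomial.eval_sub, Polynomial.eval_X, Polynomial.eval_C, sub_eq_zero] at hi
    exact ⟨i, by exact_mod_cast hi⟩
  have hbdd : BddAbove (Set.range x) := Set.Finite.bddAbove (Set.finite_range x)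
  have heig' : ∀ j, hPpsd.1.eigenvalues j ≤ l := by
    intro j
    obtain ⟨i, hi⟩ := heig j
    rw [hi]
    exact le_ciSup hbdd i
  have hl0 : (0 : ℝ) ≤ l :=
    le_trans (hPpsd.eigenvalues_nonneg 0) (heig' 0)
  have hP1 : ((l : ℂ) • 1 - R * H * R).PosSemidef :=
    herm_le_smul_one hPpsd.1 heig'
  -- rewrite the goal in ⅟ form
  show specNorm (H * sqrtm ((H)⁻¹ * B * (H)⁻¹) * H) ≤ l
  rw [← Matrix.invOf_eq_nonsing_inv H, ← hKK]
  have hiH : (⅟(H))ᴴ = ⅟(H) := by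
    rw [Matrix.invOf_eq_nonsing_inv, Matrix.conjTranspose_nonsing_inv, hH.1.eq]
  have hVpsd : (⅟(H) * (K * K) * ⅟(H)).PosSemidef := by
    have h1 : (K * K).PosSemidef := by rw [hKK]; exact hB'
    have := h1.mul_mul_conjTranspose_same (⅟(H))
    rwa [hiH] at this
  have hfin := core hH hR hRK hl0 hP1 hVpsd
  have hsqeq : sqrtm (⅟(H) * (K * K) * ⅟(H)) = hVpsd.sqrt :=
    dif_pos hVpsd
  rw [hsqeq]
  have hGpsd : (H * hVpsd.sqrt * H).PosSemidef := by
    have := hVpsd.posSemidef_sqrt.mul_mul_conjTranspose_same (H)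
    rwa [hH.1.eq] at this
  exact specNorm_le_of_le_smul_one hGpsd hl0 hfin
end

section
/- Let A and B be n×n complex positive definite matrices and define A♮B := A^{1/2}(B^{1/2}A^{-1}B^{1/2})^{1/2}A^{1/2}. Then the largest eigenvalue of A♮B is at least the largest singular value of A^{1/2}B^{1/2}: λ₁(A♮B) ≥ λ₁(|A^{1/2}B^{1/2}|). -/
open scoped ComplexOrder Matrix Classical

/-- The mean `A ♮ B := A^{1/2} (B^{1/2} A⁻¹ B^{1/2})^{1/2} A^{1/2}` of positive definite
matrices. -/
noncomputable def naturalMean {n : ℕ} (A B : Matrix (Fin n) (Fin n) ℂ) :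
    Matrix (Fin n) (Fin n) ℂ :=
  sqrtm A * sqrtm (sqrtm B * A⁻¹ * sqrtm B) * sqrtm A


/-- The largest eigenvalue of a Hermitian matrix (junk value `0` otherwise). -/
noncomputable def maxEig {n : ℕ} (A : Matrix (Fin n) (Fin n) ℂ) : ℝ :=
  if h : A.IsHermitian then ⨆ i, h.eigenvalues i else 0

open scoped Matrix.Norms.L2Operator

section AuxLemmas

variable {n : ℕ}

lemma sqrtm_eq {A : Matrix (Fin n) (Fin n) ℂ} (h : A.PosSemidef) : sqrtm A =
    (h.1.eigenvectorUnitary : Matrix (Fin n) (Fin n) ℂ) *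
      Matrix.diagonal ((↑) ∘ Real.sqrt ∘ h.1.eigenvalues) *
      (star h.1.eigenvectorUnitary : Matrix (Fin n) (Fin n) ℂ) := dif_pos h

lemma sqrtm_posSemidef {A : Matrix (Fin n) (Fin n) ℂ} (h : A.PosSemidef) :
    (sqrtm A).PosSemidef := by
  rw [sqrtm_eq h, Matrix.star_eq_conjTranspose]
  refine Matrix.PosSemidef.mul_mul_conjTranspose_same ?_ _
  refine Matrix.posSemidef_diagonal_iff.mpr fun i => ?_
  simp [Real.sqrt_nonneg]

lemma sqrtm_mul_self {A : Matrix (Fin n) (Fin n) ℂ} (h : A.PosSemidef) :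
    sqrtm A * sqrtm A = A := by
  have hU : (star h.1.eigenvectorUnitary : Matrix (Fin n) (Fin n) ℂ) *
      (h.1.eigenvectorUnitary : Matrix (Fin n) (Fin n) ℂ) = 1 :=
    Matrix.mem_unitaryGroup_iff'.mp h.1.eigenvectorUnitary.2
  have hd : Matrix.diagonal ((↑) ∘ Real.sqrt ∘ h.1.eigenvalues) *
      Matrix.diagonal ((↑) ∘ Real.sqrt ∘ h.1.eigenvalues) =
      Matrix.diagonal (RCLike.ofReal ∘ h.1.eigenvalues : Fin n → ℂ) := by
    rw [Matrix.diagonal_mul_diagonal]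
    congr 1 with i
    simp only [Function.comp_apply, ← Complex.ofReal_mul,
      Real.mul_self_sqrt (h.eigenvalues_nonneg i)]
    rfl
  rw [sqrtm_eq h]
  calc _ = (h.1.eigenvectorUnitary : Matrix (Fin n) (Fin n) ℂ) *
        (Matrix.diagonal ((↑) ∘ Real.sqrt ∘ h.1.eigenvalues) *
          Matrix.diagonal ((↑) ∘ Real.sqrt ∘ h.1.eigenvalues)) *
        (star h.1.eigenvectorUnitary : Matrix (Fin n) (Fin n) ℂ) := by
        simp only [Matrix.mul_assoc]
        rw [← Matrix.mul_assoc (star _) _, hU, Matrix.one_mul]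
    _ = A := by rw [hd]; exact h.1.spectral_theorem.symm

lemma maxEig_eq {H : Matrix (Fin n) (Fin n) ℂ} (h : H.IsHermitian) :
    maxEig H = ⨆ i, h.eigenvalues i := dif_pos h

lemma eigenvalue_le_maxEig {H : Matrix (Fin n) (Fin n) ℂ} (h : H.IsHermitian) (i : Fin n) :
    h.eigenvalues i ≤ maxEig H := by
  rw [maxEig_eq h]
  exact le_ciSup (Set.Finite.bddAbove (Set.finite_range _)) i

lemma maxEig_nonneg {H : Matrix (Fin n) (Fin n) ℂ} (h : H.PosSemidef) : 0 ≤ maxEig H := by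
  rcases isEmpty_or_nonempty (Fin n) with he | hne
  · rw [maxEig_eq h.1]
    rw [show (⨆ i, h.1.eigenvalues i) = 0 from Real.iSup_of_isEmpty _]
  · exact le_trans (h.eigenvalues_nonneg (Classical.arbitrary _)) (eigenvalue_le_maxEig h.1 _)

lemma posSemidef_smul_one_sub {H : Matrix (Fin n) (Fin n) ℂ} (h : H.IsHermitian) :
    ((maxEig H : ℂ) • 1 - H).PosSemidef := by
  set c := maxEig H
  have hU : (h.eigenvectorUnitary : Matrix (Fin n) (Fin n) ℂ) *
      (star h.eigenvectorUnitary : Matrix (Fin n) (Fin n) ℂ) = 1 :=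
    (Matrix.mem_unitaryGroup_iff).mp h.eigenvectorUnitary.2
  have key : (c : ℂ) • 1 - H =
      (h.eigenvectorUnitary : Matrix (Fin n) (Fin n) ℂ) *
        Matrix.diagonal (fun i => ((c - h.eigenvalues i : ℝ) : ℂ)) *
        (star h.eigenvectorUnitary : Matrix (Fin n) (Fin n) ℂ) := by
    have hd : Matrix.diagonal (fun i => ((c - h.eigenvalues i : ℝ) : ℂ)) =
        (c : ℂ) • 1 - Matrix.diagonal (RCLike.ofReal ∘ h.eigenvalues) := by
      rw [Matrix.smul_one_eq_diagonal, Matrix.diagonal_sub]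
      congr 1 with i
      simp
    rw [hd, Matrix.mul_sub, Matrix.sub_mul, Matrix.mul_smul, mul_one, Matrix.smul_mul, hU]
    exact congrArg (fun X => (c : ℂ) • 1 - X) h.spectral_theorem
  rw [key]
  refine Matrix.PosSemidef.mul_mul_conjTranspose_same ?_ _
  refine Matrix.posSemidef_diagonal_iff.mpr fun i => ?_
  rw [RCLike.nonneg_iff]
  refine ⟨?_, by simp⟩
  simpa using sub_nonneg.mpr (eigenvalue_le_maxEig h i)

lemma rayleigh {H : Matrix (Fin n) (Fin n) ℂ} (h : H.IsHermitian) (x : Fin n → ℂ) :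
    star x ⬝ᵥ H *ᵥ x ≤ (maxEig H : ℂ) * (star x ⬝ᵥ x) := by
  have := (posSemidef_smul_one_sub h).dotProduct_mulVec_nonneg x
  rw [Matrix.sub_mulVec, dotProduct_sub, Matrix.smul_mulVec, Matrix.one_mulVec,
    dotProduct_smul, smul_eq_mul] at this
  exact sub_nonneg.mp this

lemma conj_dot {K Z : Matrix (Fin n) (Fin n) ℂ} (hK : K.IsHermitian) (x : Fin n → ℂ) :
    star x ⬝ᵥ (K * Z * K) *ᵥ x = star (K *ᵥ x) ⬝ᵥ Z *ᵥ (K *ᵥ x) := by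
  rw [Matrix.star_mulVec, hK.eq, Matrix.mulVec_mulVec, ← Matrix.dotProduct_mulVec,
    Matrix.mulVec_mulVec, ← Matrix.mul_assoc]

lemma norm_le_maxEig {H : Matrix (Fin n) (Fin n) ℂ} (h : H.PosSemidef) :
    ‖H‖ ≤ maxEig H := by
  set c := maxEig H with hc_def
  have hc : 0 ≤ c := maxEig_nonneg h
  have hcC : (0:ℂ) ≤ (c : ℂ) := by exact_mod_cast hc
  set K := sqrtm H with hKdef
  have hK : K * K = H := sqrtm_mul_self h
  have hKher : K.IsHermitian := (sqrtm_posSemidef h).1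
  have dd : ∀ y : Fin n → ℂ, star (K *ᵥ y) ⬝ᵥ (K *ᵥ y) = star y ⬝ᵥ H *ᵥ y := by
    intro y
    rw [Matrix.star_mulVec, hKher.eq, ← Matrix.dotProduct_mulVec, Matrix.mulVec_mulVec, hK]
  have key : ∀ x : Fin n → ℂ,
      star (H *ᵥ x) ⬝ᵥ (H *ᵥ x) ≤ (c:ℂ) * ((c:ℂ) * (star x ⬝ᵥ x)) := by
    intro x
    have hy : H *ᵥ x = K *ᵥ (K *ᵥ x) := by rw [Matrix.mulVec_mulVec, hK]
    calc star (H *ᵥ x) ⬝ᵥ (H *ᵥ x) = star (K *ᵥ (K *ᵥ x)) ⬝ᵥ (K *ᵥ (K *ᵥ x)) := by rw [hy]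
      _ = star (K *ᵥ x) ⬝ᵥ H *ᵥ (K *ᵥ x) := dd (K *ᵥ x)
      _ ≤ (c:ℂ) * (star (K *ᵥ x) ⬝ᵥ (K *ᵥ x)) := rayleigh h.1 _
      _ = (c:ℂ) * (star x ⬝ᵥ H *ᵥ x) := by rw [dd x]
      _ ≤ (c:ℂ) * ((c:ℂ) * (star x ⬝ᵥ x)) :=
          mul_le_mul_of_nonneg_left (rayleigh h.1 x) hcC
  rw [Matrix.l2_opNorm_def]
  refine ContinuousLinearMap.opNorm_le_bound _ hc fun x => ?_
  have happ : (Matrix.toEuclideanLin.trans LinearMap.toContinuousLinearMap H) x =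
      (EuclideanSpace.equiv (Fin n) ℂ).symm (H *ᵥ (WithLp.equiv 2 _ x)) := rfl
  rw [happ]
  have hns : ∀ y : EuclideanSpace ℂ (Fin n),
      ‖y‖ ^ 2 = Complex.re (star (WithLp.equiv 2 _ y) ⬝ᵥ (WithLp.equiv 2 _ y)) := by
    intro y
    show _ = Complex.re (star (WithLp.ofLp y) ⬝ᵥ WithLp.ofLp y)
    rw [dotProduct_comm, ← EuclideanSpace.inner_eq_star_dotProduct]
    exact (inner_self_eq_norm_sq (𝕜 := ℂ) y).symm
  set xv : Fin n → ℂ := WithLp.equiv 2 _ x with hxv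
  have sq_ineq : ‖(EuclideanSpace.equiv (Fin n) ℂ).symm (H *ᵥ xv)‖ ^ 2 ≤ (c * ‖x‖) ^ 2 := by
    have e0 : (WithLp.equiv 2 (Fin n → ℂ)) ((EuclideanSpace.equiv (Fin n) ℂ).symm (H *ᵥ xv))
        = H *ᵥ xv := rfl
    rw [hns, e0]
    have hre := (Complex.le_def.mp (key xv)).1
    refine hre.trans ?_
    have : ((c:ℂ) * ((c:ℂ) * (star xv ⬝ᵥ xv))) = ((c * c : ℝ) : ℂ) * (star xv ⬝ᵥ xv) := by
      push_cast; ring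
    rw [this, Complex.re_ofReal_mul]
    have h2 := hns x
    rw [← hxv] at h2
    rw [← h2]
    ring_nf
    exact le_rfl
  have h1 : (0:ℝ) ≤ ‖(EuclideanSpace.equiv (Fin n) ℂ).symm (H *ᵥ xv)‖ := norm_nonneg _
  have h2 : (0:ℝ) ≤ c * ‖x‖ := mul_nonneg hc (norm_nonneg _)
  have := Real.sqrt_le_sqrt sq_ineq
  rwa [Real.sqrt_sq h1, Real.sqrt_sq h2] at this

lemma maxEig_le_norm_conj {H Q : Matrix (Fin n) (Fin n) ℂ} (h : H.IsHermitian)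
    (hQ : IsUnit Q.det) : maxEig H ≤ ‖Q * H * Q⁻¹‖ := by
  rcases isEmpty_or_nonempty (Fin n) with he | hne
  · rw [maxEig_eq h, show (⨆ i, h.eigenvalues i) = 0 from Real.iSup_of_isEmpty _]
    exact norm_nonneg _
  rw [maxEig_eq h]
  refine ciSup_le fun i => ?_
  set Z := Q * H * Q⁻¹ with hZ
  set lam := h.eigenvalues i with hlam
  set v : Fin n → ℂ := ⇑(h.eigenvectorBasis i) with hv
  have hv0 : v ≠ 0 := by
    have := h.eigenvectorBasis.orthonormal.ne_zero i
    intro hcon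
    apply this
    ext j
    exact congrFun hcon j
  have hev : H *ᵥ v = lam • v := h.mulVec_eigenvectorBasis i
  set w : Fin n → ℂ := Q *ᵥ v with hw
  have hw0 : w ≠ 0 := by
    intro hcon
    apply hv0
    have hinj : Function.Injective Q.mulVec :=
      Matrix.mulVec_injective_iff_isUnit.mpr ((Matrix.isUnit_iff_isUnit_det Q).mpr hQ)
    have : Q *ᵥ v = Q *ᵥ 0 := by rw [Matrix.mulVec_zero]; exact hcon
    exact hinj this
  have hZw : Z *ᵥ w = lam • w := by
    rw [hw, Matrix.mulVec_mulVec, hZ, Matrix.mul_assoc (Q * H),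
      Matrix.nonsing_inv_mul Q hQ, mul_one, ← Matrix.mulVec_mulVec, hev, Matrix.mulVec_smul]
  set wE : EuclideanSpace ℂ (Fin n) := (EuclideanSpace.equiv (Fin n) ℂ).symm w with hwE
  have hwE0 : ‖wE‖ ≠ 0 := by
    simp only [ne_eq, norm_eq_zero]
    intro hcon
    apply hw0
    ext j
    exact congrFun (congrArg (WithLp.equiv 2 _) hcon) j
  have hnorm : ‖(EuclideanSpace.equiv (Fin n) ℂ).symm (Z *ᵥ w)‖ = |lam| * ‖wE‖ := by
    rw [hZw]
    have : (EuclideanSpace.equiv (Fin n) ℂ).symm (lam • w) = lam • wE := rfl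
    rw [this, norm_smul, Real.norm_eq_abs]
  have hb := Matrix.l2_opNorm_mulVec Z wE
  have : |lam| * ‖wE‖ ≤ ‖Z‖ * ‖wE‖ := by
    rw [← hnorm]
    exact hb
  have hlam_le : |lam| ≤ ‖Z‖ := by
    have hpos : 0 < ‖wE‖ := lt_of_le_of_ne (norm_nonneg _) (Ne.symm hwE0)
    exact le_of_mul_le_mul_right (by linarith [this]) hpos
  exact (le_abs_self lam).trans hlam_le

lemma maxEig_eq_norm {H : Matrix (Fin n) (Fin n) ℂ} (h : H.PosSemidef) :
    maxEig H = ‖H‖ := by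
  refine le_antisymm ?_ (norm_le_maxEig h)
  have := maxEig_le_norm_conj h.1 (Q := 1) (by simp)
  simpa using this

lemma sqrtm_posDef {A : Matrix (Fin n) (Fin n) ℂ} (hA : A.PosDef) : (sqrtm A).PosDef := by
  have hps := sqrtm_posSemidef hA.posSemidef
  refine Matrix.PosDef.of_dotProduct_mulVec_pos hps.1 fun x hx => ?_
  rcases lt_or_eq_of_le (hps.dotProduct_mulVec_nonneg x) with hlt | heq
  · exact hlt
  · exfalso
    have hKx : sqrtm A *ᵥ x = 0 := (hps.dotProduct_mulVec_zero_iff x).mp heq.symm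
    have hAx : A *ᵥ x = 0 := by
      rw [← sqrtm_mul_self hA.posSemidef, ← Matrix.mulVec_mulVec, hKx, Matrix.mulVec_zero]
    have hpos := hA.dotProduct_mulVec_pos hx
    rw [hAx, dotProduct_zero] at hpos
    exact lt_irrefl 0 hpos

lemma posDef_conj {P C : Matrix (Fin n) (Fin n) ℂ} (hP : P.PosDef) (hC : IsUnit C.det) :
    (Cᴴ * P * C).PosDef := by
  refine Matrix.PosDef.of_dotProduct_mulVec_pos ?_ fun x hx => ?_
  · show (Cᴴ * P * C)ᴴ = Cᴴ * P * C
    simp only [Matrix.conjTranspose_mul, Matrix.conjTranspose_conjTranspose, hP.isHermitian.eq,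
      Matrix.mul_assoc]
  · have e : star x ⬝ᵥ (Cᴴ * P * C) *ᵥ x = star (C *ᵥ x) ⬝ᵥ P *ᵥ (C *ᵥ x) := by
      rw [Matrix.star_mulVec, Matrix.mulVec_mulVec, ← Matrix.dotProduct_mulVec,
        Matrix.mulVec_mulVec, ← Matrix.mul_assoc]
    rw [e]
    refine hP.dotProduct_mulVec_pos fun hcon => hx ?_
    have hinj : Function.Injective C.mulVec :=
      Matrix.mulVec_injective_iff_isUnit.mpr ((Matrix.isUnit_iff_isUnit_det C).mpr hC)
    exact hinj (by rw [hcon, Matrix.mulVec_zero])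

end AuxLemmas

/-- For positive definite `A, B`, the largest eigenvalue of `A ♮ B` is at least the largest
singular value of `A^{1/2} B^{1/2}`, i.e. the largest eigenvalue of `|A^{1/2} B^{1/2}|`. -/
theorem maxEig_abs_le_maxEig_naturalMean {n : ℕ}
    (A B : Matrix (Fin n) (Fin n) ℂ) (hA : A.PosDef) (hB : B.PosDef) :
    maxEig (absm (sqrtm A * sqrtm B)) ≤ maxEig (naturalMean A B) := by
  set sA := sqrtm A with hsA_def
  set sB := sqrtm B with hsB_def
  have hsA_pd : sA.PosDef := sqrtm_posDef hA
  have hsB_pd : sB.PosDef := sqrtm_posDef hB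
  have hsA_m : sA * sA = A := sqrtm_mul_self hA.posSemidef
  have hsB_m : sB * sB = B := sqrtm_mul_self hB.posSemidef
  have hM_pd : (sB * A⁻¹ * sB).PosDef := by
    have := posDef_conj (C := sB) hA.inv hsB_pd.det_pos.ne'.isUnit
    rwa [hsB_pd.isHermitian.eq] at this
  set M := sB * A⁻¹ * sB with hM_def
  set T := sqrtm M with hT_def
  have hT_pd : T.PosDef := sqrtm_posDef hM_pd
  have hT_m : T * T = M := sqrtm_mul_self hM_pd.posSemidef
  set S := sqrtm T with hS_def
  have hS_pd : S.PosDef := sqrtm_posDef hT_pd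
  have hS_m : S * S = T := sqrtm_mul_self hT_pd.posSemidef
  have hSd : IsUnit S.det := hS_pd.det_pos.ne'.isUnit
  have hBd : IsUnit sB.det := hsB_pd.det_pos.ne'.isUnit
  have hAd : IsUnit A.det := hA.det_pos.ne'.isUnit
  have cS1 : S * S⁻¹ = 1 := Matrix.mul_nonsing_inv S hSd
  have cS2 : S⁻¹ * S = 1 := Matrix.nonsing_inv_mul S hSd
  have cB1 : sB * sB⁻¹ = 1 := Matrix.mul_nonsing_inv sB hBd
  have cB2 : sB⁻¹ * sB = 1 := Matrix.nonsing_inv_mul sB hBd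
  have eS1 : ∀ X, S * (S⁻¹ * X) = X := fun X => by
    rw [← Matrix.mul_assoc, cS1, Matrix.one_mul]
  have eS2 : ∀ X, S⁻¹ * (S * X) = X := fun X => by
    rw [← Matrix.mul_assoc, cS2, Matrix.one_mul]
  have eB1 : ∀ X, sB * (sB⁻¹ * X) = X := fun X => by
    rw [← Matrix.mul_assoc, cB1, Matrix.one_mul]
  have eB2 : ∀ X, sB⁻¹ * (sB * X) = X := fun X => by
    rw [← Matrix.mul_assoc, cB2, Matrix.one_mul]
  have eA2 : ∀ X, A⁻¹ * (A * X) = X := fun X => by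
    rw [← Matrix.mul_assoc, Matrix.nonsing_inv_mul A hAd, Matrix.one_mul]
  have eAA : ∀ X, sA * (sA * X) = A * X := fun X => by
    rw [← Matrix.mul_assoc, hsA_m]
  set R := S⁻¹ * sB * S⁻¹ with hR_def
  have hSinv_her : (S⁻¹)ᴴ = S⁻¹ := by
    rw [Matrix.conjTranspose_nonsing_inv, hS_pd.isHermitian.eq]
  have hR_her : R.IsHermitian := by
    show Rᴴ = R
    rw [hR_def]
    simp only [Matrix.conjTranspose_mul, hSinv_her, hsB_pd.isHermitian.eq, Matrix.mul_assoc]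
  have hRd : IsUnit R.det := by
    rw [hR_def, Matrix.det_mul, Matrix.det_mul]
    exact ((Matrix.isUnit_nonsing_inv_det S hSd).mul hBd).mul
      (Matrix.isUnit_nonsing_inv_det S hSd)
  -- key identities
  have id1 : S * R * S = sB := by
    rw [hR_def]
    simp only [Matrix.mul_assoc, eS1, eS2, cS1, cS2, Matrix.mul_one, Matrix.one_mul]
  have hMinv : M⁻¹ = sB⁻¹ * A * sB⁻¹ := by
    refine Matrix.inv_eq_right_inv ?_
    rw [hM_def]
    simp only [Matrix.mul_assoc, eB1, eB2, eA2, cB1, cB2, Matrix.mul_one, Matrix.one_mul]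
  have id2 : A = sB * M⁻¹ * sB := by
    rw [hMinv]
    simp only [Matrix.mul_assoc, eB1, eB2, cB1, cB2, Matrix.mul_one, Matrix.one_mul]
  have hM4 : M = S * (S * (S * S)) := by
    rw [← hT_m, ← hS_m]
    simp only [Matrix.mul_assoc]
  have id3 : M⁻¹ = S⁻¹ * (S⁻¹ * (S⁻¹ * S⁻¹)) := by
    refine Matrix.inv_eq_right_inv ?_
    rw [hM4]
    simp only [Matrix.mul_assoc, eS1, eS2, cS1, cS2, Matrix.mul_one, Matrix.one_mul]
  have idA : A = S * (R * (S⁻¹ * (S⁻¹ * (R * S)))) := by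
    rw [id2, id3, ← id1]
    simp only [Matrix.mul_assoc, eS1, eS2, cS1, cS2, Matrix.mul_one, Matrix.one_mul]
  -- endpoints
  have habs_psd : (absm (sA * sB)).PosSemidef :=
    sqrtm_posSemidef (Matrix.posSemidef_conjTranspose_mul_self _)
  have hG_psd : (sA * T * sA).PosSemidef := by
    have := hT_pd.posSemidef.mul_mul_conjTranspose_same (B := sA)
    rwa [hsA_pd.isHermitian.eq] at this
  have hGoal_eq : naturalMean A B = sA * T * sA := rfl
  rw [hGoal_eq, maxEig_eq_norm hG_psd, maxEig_eq_norm habs_psd]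
  -- norm facts
  have cstar : ∀ X : Matrix (Fin n) (Fin n) ℂ, ‖Xᴴ * X‖ = ‖X‖ * ‖X‖ :=
    Matrix.l2_opNorm_conjTranspose_mul_self
  have nct : ∀ X : Matrix (Fin n) (Fin n) ℂ, ‖Xᴴ‖ = ‖X‖ := Matrix.l2_opNorm_conjTranspose
  have cstar' : ∀ X : Matrix (Fin n) (Fin n) ℂ, ‖X * Xᴴ‖ = ‖X‖ * ‖X‖ := fun X => by
    have := cstar Xᴴ
    rwa [Matrix.conjTranspose_conjTranspose, nct X] at this
  have habs_eq : ‖absm (sA * sB)‖ = ‖sA * sB‖ := by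
    have h1 : ‖absm (sA * sB)‖ * ‖absm (sA * sB)‖ = ‖sA * sB‖ * ‖sA * sB‖ := by
      have e1 : (absm (sA * sB))ᴴ * absm (sA * sB) = (sA * sB)ᴴ * (sA * sB) := by
        rw [habs_psd.isHermitian.eq]
        exact sqrtm_mul_self (Matrix.posSemidef_conjTranspose_mul_self _)
      rw [← cstar, e1, cstar]
    calc ‖absm (sA * sB)‖ = Real.sqrt (‖absm (sA * sB)‖ * ‖absm (sA * sB)‖) :=
          (Real.sqrt_mul_self (norm_nonneg _)).symm
      _ = Real.sqrt (‖sA * sB‖ * ‖sA * sB‖) := by rw [h1]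
      _ = ‖sA * sB‖ := Real.sqrt_mul_self (norm_nonneg _)
  set W := S⁻¹ * (R * (S * (S * (R * S)))) with hW_def
  have idW : (sA * sB)ᴴ * (sA * sB) = Wᴴ * W := by
    have lhs : (sA * sB)ᴴ * (sA * sB) = sB * (A * sB) := by
      simp only [Matrix.conjTranspose_mul, hsA_pd.isHermitian.eq, hsB_pd.isHermitian.eq,
        Matrix.mul_assoc, eAA]
    rw [lhs, hW_def, ← id1, idA]
    simp only [Matrix.conjTranspose_mul, hSinv_her, hS_pd.isHermitian.eq, hR_her.eq,
      Matrix.mul_assoc, eS1, eS2, cS1, cS2, Matrix.mul_one, Matrix.one_mul]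
  have nW : ‖sA * sB‖ = ‖W‖ := by
    have h1 : ‖sA * sB‖ * ‖sA * sB‖ = ‖W‖ * ‖W‖ := by rw [← cstar, idW, cstar]
    calc ‖sA * sB‖ = Real.sqrt (‖sA * sB‖ * ‖sA * sB‖) :=
          (Real.sqrt_mul_self (norm_nonneg _)).symm
      _ = Real.sqrt (‖W‖ * ‖W‖) := by rw [h1]
      _ = ‖W‖ := Real.sqrt_mul_self (norm_nonneg _)
  set Y := S⁻¹ * (R * (S * S)) with hY_def
  have idW2 : W = Y * (R * S) := by
    rw [hW_def, hY_def]
    simp only [Matrix.mul_assoc]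
  have nRS_SR : ‖R * S‖ = ‖S * R‖ := by
    have e : (R * S)ᴴ = S * R := by
      rw [Matrix.conjTranspose_mul, hS_pd.isHermitian.eq, hR_her.eq]
    rw [← e, nct]
  set P0 := R * (S * (S * R)) with hP0_def
  have hP0_eq : (S * R)ᴴ * (S * R) = P0 := by
    rw [Matrix.conjTranspose_mul, hS_pd.isHermitian.eq, hR_her.eq, hP0_def]
    simp only [Matrix.mul_assoc]
  have hP0_psd : P0.PosSemidef := hP0_eq ▸ Matrix.posSemidef_conjTranspose_mul_self (S * R)
  have eR2 : ∀ X, R⁻¹ * (R * X) = X := fun X => by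
    rw [← Matrix.mul_assoc, Matrix.nonsing_inv_mul R hRd, Matrix.one_mul]
  have hconj : R⁻¹ * P0 * R⁻¹⁻¹ = S * (S * (R * R)) := by
    rw [Matrix.nonsing_inv_nonsing_inv R hRd, hP0_def]
    simp only [Matrix.mul_assoc, eR2]
  have hcore : ‖S * R‖ ≤ ‖Y‖ := by
    have h1 : ‖S * R‖ * ‖S * R‖ = ‖P0‖ := by rw [← cstar, hP0_eq]
    have h2 : maxEig P0 ≤ ‖S * (S * (R * R))‖ := by
      have := maxEig_le_norm_conj hP0_psd.1 (Q := R⁻¹) (Matrix.isUnit_nonsing_inv_det R hRd)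
      rwa [hconj] at this
    have h3 : ‖P0‖ = maxEig P0 := (maxEig_eq_norm hP0_psd).symm
    have h4 : S * (S * (R * R)) = (S * (S * (R * S⁻¹))) * (S * R) := by
      simp only [Matrix.mul_assoc, eS2]
    have h5 : ‖S * (S * (R * R))‖ ≤ ‖S * (S * (R * S⁻¹))‖ * ‖S * R‖ := by
      rw [h4]
      exact Matrix.l2_opNorm_mul _ _
    have h6 : ‖S * (S * (R * S⁻¹))‖ = ‖Y‖ := by
      have e : (S * (S * (R * S⁻¹)))ᴴ = Y := by
        rw [hY_def]
        simp only [Matrix.conjTranspose_mul, hSinv_her, hS_pd.isHermitian.eq, hR_her.eq,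
          Matrix.mul_assoc]
      rw [← e, nct]
    have hfin : ‖S * R‖ * ‖S * R‖ ≤ ‖Y‖ * ‖S * R‖ := by
      rw [h1, h3]
      exact h2.trans (by rw [← h6]; exact h5)
    nlinarith [norm_nonneg (S * R), norm_nonneg Y, hfin]
  have hYY : ‖Y‖ * ‖Y‖ = ‖sA * T * sA‖ := by
    have e1 : Yᴴ * Y = S * (A * S) := by
      rw [hY_def, idA]
      simp only [Matrix.conjTranspose_mul, hSinv_her, hS_pd.isHermitian.eq, hR_her.eq,
        Matrix.mul_assoc, eS1, eS2, cS1, cS2, Matrix.mul_one, Matrix.one_mul]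
    have e2 : S * (A * S) = (sA * S)ᴴ * (sA * S) := by
      simp only [Matrix.conjTranspose_mul, hsA_pd.isHermitian.eq, hS_pd.isHermitian.eq,
        Matrix.mul_assoc, eAA]
    have e3 : (sA * S) * (sA * S)ᴴ = sA * T * sA := by
      rw [Matrix.conjTranspose_mul, hsA_pd.isHermitian.eq, hS_pd.isHermitian.eq, ← hS_m]
      simp only [Matrix.mul_assoc]
    calc ‖Y‖ * ‖Y‖ = ‖Yᴴ * Y‖ := (cstar Y).symm
      _ = ‖(sA * S)ᴴ * (sA * S)‖ := by rw [e1, e2]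
      _ = ‖sA * S‖ * ‖sA * S‖ := cstar _
      _ = ‖(sA * S) * (sA * S)ᴴ‖ := (cstar' _).symm
      _ = ‖sA * T * sA‖ := by rw [e3]
  calc ‖absm (sA * sB)‖ = ‖sA * sB‖ := habs_eq
    _ = ‖W‖ := nW
    _ ≤ ‖Y‖ * ‖R * S‖ := by
        rw [idW2]
        exact Matrix.l2_opNorm_mul _ _
    _ ≤ ‖Y‖ * ‖Y‖ := mul_le_mul_of_nonneg_left (by rw [nRS_SR]; exact hcore) (norm_nonneg Y)
    _ = ‖sA * T * sA‖ := hYY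
end
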